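/- Let d ≥ 3, N ≥ 1, and let U ⊊ T_N = (Z/NZ)^d be a proper subset of the discrete torus. Then for all x, y ∈ T_N: G_N(x,y) = g^U(x,y) + E_x[ G_N(X_{T_U}, y) ] − N^{−d} E_x[T_U], where G_N is the zero-average Green function on T_N, g^U is the Green function of simple random walk on T_N killed when exiting U, and T_U is the exit time from U. -/

import Mathlib

open MeasureTheory ProbabilityTheory ENNReal Filter
open scoped Classical

namespace GFFPaper

/-- The lattice `ℤ^d`. -/
abbrev V (d : ℕ) := Fin d → ℤ

/-- The discrete torus `(ℤ/Nℤ)^d`. -/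
abbrev T (d N : ℕ) := Fin d → ZMod N

/-- One-step transition kernel of simple random walk on `ℤ^d`. -/
noncomputable def step (d : ℕ) (u v : V d) : ℝ≥0∞ :=
  if (∑ i, (v i - u i).natAbs) = 1 then (1 : ℝ≥0∞) / (2 * d) else 0

/-- `heat d x k y = P_x[X_k = y]` for simple random walk on `ℤ^d`. -/
noncomputable def heat (d : ℕ) (x : V d) : ℕ → V d → ℝ≥0∞
  | 0, y => if x = y then 1 else 0
  | (k+1), y => ∑' z, heat d x k z * step d z y

/-- Green function of simple random walk on `ℤ^d`. -/
noncomputable def green (d : ℕ) (x y : V d) : ℝ≥0∞ := ∑' k, heat d x k y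

/-- `kheat d U x k y = P_x[X_k = y, k < T_U]` (walk killed when exiting `U`). -/
noncomputable def kheat (d : ℕ) (U : Set (V d)) (x : V d) : ℕ → V d → ℝ≥0∞
  | 0, y => if x = y ∧ x ∈ U then 1 else 0
  | (k+1), y => if y ∈ U then ∑' z, kheat d U x k z * step d z y else 0

/-- Green function of simple random walk on `ℤ^d` killed when exiting `U`. -/
noncomputable def kgreen (d : ℕ) (U : Set (V d)) (x y : V d) : ℝ≥0∞ := ∑' k, kheat d U x k y

/-- Exit distribution: `exitDist d U x z = P_x[T_U < ∞, X_{T_U} = z]`. -/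
noncomputable def exitDist (d : ℕ) (U : Set (V d)) (x z : V d) : ℝ≥0∞ :=
  if z ∈ U then 0 else
    (if x = z ∧ x ∉ U then 1 else 0) + ∑' (k : ℕ), ∑' w, kheat d U x k w * step d w z

/-- The unit step in direction `s` on the torus. -/
def dirT (d N : ℕ) (s : Fin d × Bool) : T d N :=
  fun j => if j = s.1 then (if s.2 then 1 else -1) else 0

/-- One-step transition kernel of simple random walk on the torus. -/
noncomputable def stepT (d N : ℕ) (u v : T d N) : ℝ≥0∞ :=
  ((Finset.univ.filter (fun s : Fin d × Bool => v = u + dirT d N s)).card : ℝ≥0∞) / (2 * d)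

/-- `heatT d N x k y = P_x[X_k = y]` for simple random walk on the torus. -/
noncomputable def heatT (d N : ℕ) (x : T d N) : ℕ → T d N → ℝ≥0∞
  | 0, y => if x = y then 1 else 0
  | (k+1), y => ∑' z, heatT d N x k z * stepT d N z y

/-- Killed transition probabilities on the torus. -/
noncomputable def kheatT (d N : ℕ) (U : Set (T d N)) (x : T d N) : ℕ → T d N → ℝ≥0∞
  | 0, y => if x = y ∧ x ∈ U then 1 else 0
  | (k+1), y => if y ∈ U then ∑' z, kheatT d N U x k z * stepT d N z y else 0

/-- Green function of simple random walk on the torus killed when exiting `U`. -/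
noncomputable def kgreenT (d N : ℕ) (U : Set (T d N)) (x y : T d N) : ℝ≥0∞ :=
  ∑' k, kheatT d N U x k y

/-- Exit distribution from `U` on the torus. -/
noncomputable def exitDistT (d N : ℕ) (U : Set (T d N)) (x z : T d N) : ℝ≥0∞ :=
  if z ∈ U then 0 else
    (if x = z ∧ x ∉ U then 1 else 0) + ∑' (k : ℕ), ∑' w, kheatT d N U x k w * stepT d N w z

/-- Expected exit time `E_x[T_U]` on the torus, via `E_x[T_U] = ∑_k P_x[T_U > k]`. -/
noncomputable def etimeT (d N : ℕ) (U : Set (T d N)) (x : T d N) : ℝ≥0∞ :=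
  ∑' (k : ℕ), ∑' z, kheatT d N U x k z

/-- Continuous-time heat kernel `P_x[X̄_t = y]` on the torus (rate-1 exponential holding times). -/
noncomputable def hct (d N : ℕ) (t : ℝ) (x y : T d N) : ℝ :=
  ∑' k : ℕ, Real.exp (-t) * t ^ k / (Nat.factorial k) * (heatT d N x k y).toReal

/-- The zero-average Green function `G_N(x,y) = ∫_0^∞ (P_x[X̄_t = y] - N^{-d}) dt` on the torus. -/
noncomputable def G (d N : ℕ) (x y : T d N) : ℝ :=
  ∫ t in Set.Ioi (0:ℝ), (hct d N t x y - 1 / (N:ℝ) ^ d)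

/-- Canonical projection `π_N : ℤ^d → (ℤ/Nℤ)^d`. -/
def projN (d N : ℕ) (v : V d) : T d N := fun i => ((v i : ℤ) : ZMod N)

/-- The canonical lift of a torus point into `(-N/2, N/2]^d ∩ ℤ^d`. -/
def liftT (d N : ℕ) (x : T d N) : V d :=
  fun i => if (x i).val ≤ N / 2 then ((x i).val : ℤ) else ((x i).val : ℤ) - N

/-- Nearest-neighbour adjacency on `ℤ^d`. -/
def adj (d : ℕ) (x y : V d) : Prop := (∑ i, (x i - y i).natAbs) = 1

/-- Nearest-neighbour adjacency on the torus. -/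
def adjT (d N : ℕ) (x y : T d N) : Prop := ∃ s : Fin d × Bool, y = x + dirT d N s

/-- Outer boundary of a set in `ℤ^d`. -/
def latBoundary (d : ℕ) (A : Set (V d)) : Set (V d) := {y | y ∉ A ∧ ∃ x ∈ A, adj d x y}

/-- Outer boundary of a set in the torus. -/
def torBoundary (d N : ℕ) (A : Set (T d N)) : Set (T d N) := {y | y ∉ A ∧ ∃ x ∈ A, adjT d N x y}

/-- `v ∈ (-N/2, N/2]^d` (stated via `2 * v i` to avoid integer division). -/
def inHalfBox (d N : ℕ) (v : V d) : Prop := ∀ i, -(N:ℤ) < 2 * v i ∧ 2 * v i ≤ N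

/-- `U ⊆ T_N` is properly contained: the outer boundary of its canonical lift stays
in `(-N/2, N/2]^d`. -/
def ProperlyContained (d N : ℕ) (U : Set (T d N)) : Prop :=
  ∀ y ∈ latBoundary d (liftT d N '' U), inHalfBox d N y

/-- `x` and `y` are connected within `S` by a nearest-neighbour path (w.r.t. adjacency `A`). -/
def ConnIn {α : Type*} (A : α → α → Prop) (S : Set α) (x y : α) : Prop :=
  ∃ (n : ℕ) (γ : ℕ → α), γ 0 = x ∧ γ n = y ∧ (∀ k ≤ n, γ k ∈ S) ∧ ∀ k < n, A (γ k) (γ (k+1))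

/-- The connected component of `x` inside `S`. -/
def comp {α : Type*} (A : α → α → Prop) (S : Set α) (x : α) : Set α := {y | ConnIn A S x y}

/-- Graph distance on the torus. -/
noncomputable def distT (d N : ℕ) (x y : T d N) : ℕ :=
  sInf {n : ℕ | ∃ v : V d, projN d N v = y - x ∧ (∑ i, (v i).natAbs) = n}

/-- Euclidean norm on `ℤ^d`. -/
noncomputable def euclNorm (d : ℕ) (x : V d) : ℝ := Real.sqrt (∑ i, ((x i : ℝ))^2)

/-- `φ` is a Gaussian free field on `ℤ^d` under `P`: every finite linear combination is a
centered Gaussian with variance given by the Green function. -/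
def IsLatticeGFF (d : ℕ) {Ω : Type*} [MeasurableSpace Ω] (P : Measure Ω)
    (φ : V d → Ω → ℝ) : Prop :=
  ∀ (s : Finset (V d)) (c : V d → ℝ),
    Measure.map (fun ω => ∑ x ∈ s, c x * φ x ω) P =
      gaussianReal 0 (∑ x ∈ s, ∑ y ∈ s, c x * (green d x y).toReal * c y).toNNReal

/-- `Ψ` is a zero-average Gaussian free field on the torus under `P`: every finite linear
combination is a centered Gaussian with variance given by the zero-average Green function. -/
def IsTorusGFF (d N : ℕ) {Ω : Type*} [MeasurableSpace Ω] (P : Measure Ω)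
    (Ψ : T d N → Ω → ℝ) : Prop :=
  ∀ (s : Finset (T d N)) (c : T d N → ℝ),
    Measure.map (fun ω => ∑ x ∈ s, c x * Ψ x ω) P =
      gaussianReal 0 (∑ x ∈ s, ∑ y ∈ s, c x * G d N x y * c y).toNNReal

/-- Level-set percolation probability `η(h)` (as a value in `ℝ≥0∞`). -/
noncomputable def percProb (d : ℕ) {Ω : Type*} [MeasurableSpace Ω] (P : Measure Ω)
    (φ : V d → Ω → ℝ) (h : ℝ) : ℝ≥0∞ :=
  P {ω | (comp (adj d) {v | h ≤ φ v ω} (0 : V d)).Infinite}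

/-- Critical level `h⋆` of level-set percolation. -/
noncomputable def hStar (d : ℕ) {Ω : Type*} [MeasurableSpace Ω] (P : Measure Ω)
    (φ : V d → Ω → ℝ) : ℝ :=
  sInf {h : ℝ | percProb d P φ h = 0}

/-- Second critical level `h⋆⋆`: above it the two-point connectivity function of the level set
decays (stretched-)exponentially (with the polylogarithmic correction covering `d = 3`). -/
noncomputable def hStarStar (d : ℕ) {Ω : Type*} [MeasurableSpace Ω] (P : Measure Ω)
    (φ : V d → Ω → ℝ) : ℝ :=
  sInf {a : ℝ | ∃ c > (0:ℝ), ∃ C > (0:ℝ), ∀ x : V d,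
    P {ω | ConnIn (adj d) {v | a ≤ φ v ω} 0 x} ≤
      ENNReal.ofReal (C * Real.exp (-(c * euclNorm d x) / (Real.log (2 + euclNorm d x)) ^ 6))}

/-- The box `U_N = {-⌈N/2⌉+2, …, ⌊N/2⌋-1}^d` in `ℤ^d`. -/
def UBox (d N : ℕ) : Set (V d) :=
  {v | ∀ i, -(((N+1)/2 : ℕ) : ℤ) + 2 ≤ v i ∧ v i ≤ ((N/2 : ℕ) : ℤ) - 1}

/-- The box `(-(N-N^δ-2)/2, (N-N^δ-2)/2]^d` in `ℤ^d`. -/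
noncomputable def BBox (d N : ℕ) (δ : ℝ) : Set (V d) :=
  {v | ∀ i, -((N - (N:ℝ)^δ - 2)/2) < (v i : ℝ) ∧ (v i : ℝ) ≤ (N - (N:ℝ)^δ - 2)/2}

/-- The projection of `BBox` to the torus. -/
noncomputable def BBoxT (d N : ℕ) (δ : ℝ) : Set (T d N) := projN d N '' BBox d N δ


section Basic

variable (d N : ℕ) [NeZero N]

lemma dirT_neg (s : Fin d × Bool) : dirT d N (s.1, !s.2) = - dirT d N s := by
  funext j
  simp only [Pi.neg_apply, dirT]
  by_cases h : j = s.1 <;> cases hs : s.2 <;> simp [h]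

lemma stepT_symm (u v : T d N) : stepT d N u v = stepT d N v u := by
  unfold stepT
  congr 1
  norm_cast
  apply Finset.card_bij (fun s _ => (s.1, !s.2))
  · intro s hs
    simp only [Finset.mem_filter, Finset.mem_univ, true_and] at hs ⊢
    rw [dirT_neg, hs]
    abel
  · intro a ha b hb hab
    simp only [Prod.mk.injEq] at hab
    exact Prod.ext hab.1 (Bool.not_inj hab.2)
  · intro b hb
    refine ⟨(b.1, !b.2), ?_, by simp⟩
    simp only [Finset.mem_filter, Finset.mem_univ, true_and] at hb ⊢
    rw [dirT_neg, hb]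
    abel

omit [NeZero N] in
lemma two_d_ne_zero (hd : d ≠ 0) : (2 * (d:ℝ≥0∞)) ≠ 0 := by
  simp [hd]

omit [NeZero N] in
lemma two_d_ne_top : (2 * (d:ℝ≥0∞)) ≠ ⊤ := by
  simp [ENNReal.mul_eq_top]

lemma stepT_ne_top (hd : d ≠ 0) (u v : T d N) : stepT d N u v ≠ ⊤ := by
  unfold stepT
  simp [ENNReal.div_eq_top, two_d_ne_zero d hd, hd]

lemma sum_stepT (hd : d ≠ 0) (u : T d N) : ∑' v, stepT d N u v = 1 := by
  rw [tsum_fintype]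
  unfold stepT
  simp only [div_eq_mul_inv, ← Finset.sum_mul]
  have : ∑ v : T d N, ((Finset.univ.filter
      (fun s : Fin d × Bool => v = u + dirT d N s)).card : ℝ≥0∞)
      = ((Finset.univ : Finset (Fin d × Bool)).card : ℝ≥0∞) := by
    rw [Finset.card_eq_sum_card_fiberwise
      (f := fun s : Fin d × Bool => u + dirT d N s) (t := Finset.univ) (fun s _ => Finset.mem_univ _)]
    push_cast
    congr 1
    funext v
    congr 1
    congr 1
    ext s
    simp [eq_comm]
  rw [this]
  have hcard : ((Finset.univ : Finset (Fin d × Bool)).card : ℝ≥0∞) = 2 * d := by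
    simp [Finset.card_univ, mul_comm]
  rw [hcard, ← div_eq_mul_inv, ENNReal.div_self (two_d_ne_zero d hd) (two_d_ne_top d)]

lemma stepT_dir_ne_zero (z : T d N) (s : Fin d × Bool) :
    stepT d N z (z + dirT d N s) ≠ 0 := by
  unfold stepT
  rw [ENNReal.div_ne_zero]
  constructor
  · have : s ∈ Finset.univ.filter (fun s' : Fin d × Bool => z + dirT d N s = z + dirT d N s') := by
      simp
    simp only [ne_eq, Nat.cast_eq_zero, Finset.card_eq_zero]
    intro h
    rw [h] at this
    exact absurd this (Finset.notMem_empty _)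
  · exact two_d_ne_top d

lemma heatT_succ (x y : T d N) (k : ℕ) :
    heatT d N x (k+1) y = ∑ z : T d N, heatT d N x k z * stepT d N z y := by
  rw [show heatT d N x (k+1) y = ∑' z, heatT d N x k z * stepT d N z y from rfl, tsum_fintype]

lemma sum_heatT (hd : d ≠ 0) (x : T d N) (k : ℕ) : ∑ y : T d N, heatT d N x k y = 1 := by
  induction k with
  | zero =>
    simp only [heatT]
    simp
  | succ k ih =>
    simp only [heatT_succ]
    rw [Finset.sum_comm]
    calc ∑ z : T d N, ∑ y : T d N, heatT d N x k z * stepT d N z y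
        = ∑ z : T d N, heatT d N x k z * ∑ y : T d N, stepT d N z y := by
          simp [Finset.mul_sum]
      _ = ∑ z : T d N, heatT d N x k z := by
          refine Finset.sum_congr rfl fun z _ => ?_
          rw [← tsum_fintype (L := .unconditional _), sum_stepT d N hd, mul_one]
      _ = 1 := ih

lemma heatT_le_one (hd : d ≠ 0) (x : T d N) (k : ℕ) (y : T d N) : heatT d N x k y ≤ 1 := by
  rw [← sum_heatT d N hd x k]
  exact Finset.single_le_sum (f := fun y => heatT d N x k y) (fun _ _ => zero_le) (Finset.mem_univ y)

lemma heatT_ne_top (hd : d ≠ 0) (x : T d N) (k : ℕ) (y : T d N) : heatT d N x k y ≠ ⊤ :=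
  ne_top_of_le_ne_top one_ne_top (heatT_le_one d N hd x k y)

lemma sum_heatT_col (hd : d ≠ 0) (y : T d N) (k : ℕ) : ∑ x : T d N, heatT d N x k y = 1 := by
  induction k generalizing y with
  | zero =>
    simp only [heatT]
    simp
  | succ k ih =>
    simp only [heatT_succ]
    rw [Finset.sum_comm]
    calc ∑ z : T d N, ∑ x : T d N, heatT d N x k z * stepT d N z y
        = ∑ z : T d N, stepT d N z y := by
          refine Finset.sum_congr rfl (fun z _ => ?_)
          rw [← Finset.sum_mul, ih z, one_mul]
      _ = ∑ z : T d N, stepT d N y z := by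
          exact Finset.sum_congr rfl (fun z _ => stepT_symm d N z y)
      _ = 1 := by rw [← tsum_fintype (L := .unconditional _), sum_stepT d N hd]

lemma heatT_add (x y : T d N) (j k : ℕ) :
    heatT d N x (j + k) y = ∑ z : T d N, heatT d N x j z * heatT d N z k y := by
  induction k generalizing y with
  | zero =>
    simp only [Nat.add_zero, heatT]
    rw [Finset.sum_congr rfl (fun z _ => by rw [mul_ite, mul_one, mul_zero])]
    rw [Finset.sum_ite_eq' Finset.univ y (fun z => heatT d N x j z)]
    simp [heatT]
  | succ k ih =>
    rw [show j + (k+1) = (j + k) + 1 from rfl, heatT_succ]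
    simp only [ih, Finset.sum_mul, mul_assoc]
    rw [Finset.sum_comm]
    refine Finset.sum_congr rfl fun w _ => ?_
    rw [heatT_succ, Finset.mul_sum]

lemma heatT_exists_ne_zero (hd : d ≠ 0) (x y : T d N) : ∃ k, heatT d N x k y ≠ 0 := by
  have key : ∀ (n : ℕ) (m : Fin d → ℕ), (∑ i, m i) = n →
      ∃ k, heatT d N x k (x + fun i => ((m i : ℕ) : ZMod N)) ≠ 0 := by
    intro n
    induction n with
    | zero =>
      intro m hm
      have hm0 : ∀ i, m i = 0 := by
        intro i
        exact (Finset.sum_eq_zero_iff.mp hm) i (Finset.mem_univ i)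
      refine ⟨0, ?_⟩
      have : (fun i => ((m i : ℕ) : ZMod N)) = (0 : T d N) := by
        funext i; simp [hm0 i]
      rw [this, add_zero]
      simp [heatT]
    | succ n ih =>
      intro m hm
      have hex : ∃ i, m i ≠ 0 := by
        by_contra h
        push_neg at h
        simp [h] at hm
      obtain ⟨i, hi⟩ := hex
      set m' := Function.update m i (m i - 1) with hm'
      have hsum : ∑ j, m' j = n := by
        rw [hm', Finset.sum_update_of_mem (Finset.mem_univ i)]
        have h2 : ∑ j, m j = m i + ∑ j ∈ Finset.univ \ {i}, m j := by
          rw [Finset.sum_eq_add_sum_sdiff_singleton_of_mem (Finset.mem_univ i)]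
        omega
      obtain ⟨k, hk⟩ := ih m' hsum
      set z := x + fun j => ((m' j : ℕ) : ZMod N) with hz
      have htarget : (x + fun j => ((m j : ℕ) : ZMod N)) = z + dirT d N (i, true) := by
        rw [hz]
        funext j
        simp only [Pi.add_apply, dirT]
        by_cases hji : j = i
        · subst hji
          simp only [if_pos rfl, if_pos rfl, hm', Function.update_self]
          have : m j = (m j - 1) + 1 := by omega
          rw [this]
          push_cast
          ring
        · simp only [if_neg hji, hm', Function.update_of_ne hji]
          ring
      refine ⟨k + 1, ?_⟩
      rw [htarget]
      have hle : heatT d N x k z * stepT d N z (z + dirT d N (i, true))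
          ≤ heatT d N x (k+1) (z + dirT d N (i, true)) := by
        rw [show heatT d N x (k+1) (z + dirT d N (i,true))
          = ∑' w, heatT d N x k w * stepT d N w (z + dirT d N (i,true)) from rfl]
        exact ENNReal.le_tsum z
      intro h0
      rw [h0] at hle
      exact (mul_ne_zero hk (stepT_dir_ne_zero d N z (i, true))) (le_zero_iff.mp hle)
  obtain ⟨k, hk⟩ := key (∑ i, ((y - x) i).val) (fun i => ((y - x) i).val) rfl
  refine ⟨k, ?_⟩
  have : (x + fun i => ((((y - x) i).val : ℕ) : ZMod N)) = y := by
    funext i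
    simp only [Pi.add_apply]
    rw [ZMod.natCast_val]
    simp [ZMod.cast_id]
  rwa [this] at hk

end Basic
end GFFPaper

namespace GFFPaper

section Killed

variable (d N : ℕ) [NeZero N] (U : Set (T d N))

lemma kheatT_succ (x y : T d N) (k : ℕ) :
    kheatT d N U x (k+1) y =
      if y ∈ U then ∑ z : T d N, kheatT d N U x k z * stepT d N z y else 0 := by
  rw [show kheatT d N U x (k+1) y
    = if y ∈ U then ∑' z, kheatT d N U x k z * stepT d N z y else 0 from rfl, tsum_fintype]

lemma kheatT_of_not_mem_left (x : T d N) (hx : x ∉ U) (k : ℕ) (y : T d N) :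
    kheatT d N U x k y = 0 := by
  induction k generalizing y with
  | zero => simp only [kheatT]; simp_all [hx]
  | succ k ih => simp [kheatT_succ, ih]

lemma kheatT_of_not_mem_right (x : T d N) (k : ℕ) (y : T d N) (hy : y ∉ U) :
    kheatT d N U x k y = 0 := by
  cases k with
  | zero =>
    simp only [kheatT]
    rw [if_neg]
    rintro ⟨rfl, h2⟩
    exact hy h2
  | succ k => simp [kheatT_succ, hy]

lemma kheatT_le_heatT (x : T d N) (k : ℕ) (y : T d N) :
    kheatT d N U x k y ≤ heatT d N x k y := by
  induction k generalizing y with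
  | zero =>
    simp only [kheatT, heatT]
    split_ifs with h1 h2 h2 <;> simp_all
  | succ k ih =>
    rw [kheatT_succ, heatT_succ]
    split_ifs with h
    · exact Finset.sum_le_sum fun z _ => mul_le_mul_left (ih z) _
    · exact zero_le

lemma kheatT_le_one (hd : d ≠ 0) (x : T d N) (k : ℕ) (y : T d N) :
    kheatT d N U x k y ≤ 1 :=
  (kheatT_le_heatT d N U x k y).trans (heatT_le_one d N hd x k y)

lemma kheatT_add (x y : T d N) (j k : ℕ) :
    kheatT d N U x (j + k) y = ∑ z : T d N, kheatT d N U x j z * kheatT d N U z k y := by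
  induction k generalizing y with
  | zero =>
    simp only [Nat.add_zero, kheatT]
    by_cases h : y ∈ U
    · rw [Finset.sum_congr rfl (fun z _ => show kheatT d N U x j z *
          (if z = y ∧ z ∈ U then (1:ℝ≥0∞) else 0) = if z = y then kheatT d N U x j z else 0 by
        by_cases hzy : z = y
        · subst hzy; simp [h]
        · rw [if_neg (fun hc => hzy hc.1), if_neg hzy, mul_zero])]
      rw [Finset.sum_ite_eq' Finset.univ y (fun z => kheatT d N U x j z)]
      simp
    · rw [kheatT_of_not_mem_right d N U x j y h]
      symm
      refine Finset.sum_eq_zero fun z _ => ?_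
      have hne : ¬(z = y ∧ z ∈ U) := by rintro ⟨rfl, hz⟩; exact h hz
      rw [if_neg hne, mul_zero]
  | succ k ih =>
    rw [show j + (k+1) = (j + k) + 1 from rfl, kheatT_succ]
    simp only [ih, Finset.sum_mul, mul_assoc]
    split_ifs with h
    · rw [Finset.sum_comm]
      refine Finset.sum_congr rfl fun w _ => ?_
      rw [kheatT_succ, if_pos h, Finset.mul_sum]
    · symm
      refine Finset.sum_eq_zero fun w _ => ?_
      rw [kheatT_succ, if_neg h, mul_zero]

lemma kheatT_one (x y : T d N) (hx : x ∈ U) :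
    kheatT d N U x 1 y = if y ∈ U then stepT d N x y else 0 := by
  rw [kheatT_succ]
  split_ifs with h
  · simp only [kheatT]
    rw [Finset.sum_congr rfl (fun z _ => show
        (if x = z ∧ x ∈ U then (1:ℝ≥0∞) else 0) * stepT d N z y
          = if z = x then stepT d N z y else 0 by
      by_cases hzx : z = x
      · subst hzx; simp [hx]
      · rw [if_neg (fun hc => hzx hc.1.symm), if_neg hzx, zero_mul])]
    rw [Finset.sum_ite_eq' Finset.univ x (fun z => stepT d N z y)]
    simp
  · rfl

lemma kheatT_succ_left (x y : T d N) (hx : x ∈ U) (k : ℕ) :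
    kheatT d N U x (k+1) y = ∑ z : T d N, stepT d N x z * kheatT d N U z k y := by
  rw [show k + 1 = 1 + k by omega, kheatT_add]
  refine Finset.sum_congr rfl fun z _ => ?_
  rw [kheatT_one d N U x z hx]
  split_ifs with h
  · rfl
  · rw [zero_mul, kheatT_of_not_mem_left d N U z h, mul_zero]

end Killed
end GFFPaper

namespace GFFPaper
section Mass

variable (d N : ℕ) [NeZero N] (U : Set (T d N))

/-- Mass of the killed walk at time `k`: `P_x[T_U > k]`. -/
noncomputable def kmass (d N : ℕ) [NeZero N] (U : Set (T d N)) (x : T d N) (k : ℕ) : ℝ≥0∞ :=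
  ∑ z : T d N, kheatT d N U x k z

lemma kmass_zero (x : T d N) : kmass d N U x 0 = if x ∈ U then 1 else 0 := by
  unfold kmass
  simp only [kheatT]
  by_cases hx : x ∈ U
  · rw [if_pos hx]
    rw [Finset.sum_congr rfl (fun z _ => show (if x = z ∧ x ∈ U then (1:ℝ≥0∞) else 0)
      = if z = x then 1 else 0 by
        by_cases hzx : z = x
        · subst hzx; simp [hx]
        · rw [if_neg (fun hc => hzx hc.1.symm), if_neg hzx])]
    rw [Finset.sum_ite_eq' Finset.univ x (fun _ => (1:ℝ≥0∞))]
    simp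
  · rw [if_neg hx]
    exact Finset.sum_eq_zero (fun z _ => by rw [if_neg (fun hc => hx hc.2)])

lemma kmass_zero_le_one (x : T d N) : kmass d N U x 0 ≤ 1 := by
  rw [kmass_zero]
  split_ifs <;> simp

lemma kmass_le_one (hd : d ≠ 0) (x : T d N) (k : ℕ) : kmass d N U x k ≤ 1 := by
  unfold kmass
  calc ∑ z : T d N, kheatT d N U x k z ≤ ∑ z : T d N, heatT d N x k z :=
        Finset.sum_le_sum fun z _ => kheatT_le_heatT d N U x k z
    _ = 1 := sum_heatT d N hd x k

lemma kmass_add (x : T d N) (j k : ℕ) :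
    kmass d N U x (j + k) = ∑ z : T d N, kheatT d N U x j z * kmass d N U z k := by
  unfold kmass
  rw [Finset.sum_congr rfl (fun y _ => kheatT_add d N U x y j k), Finset.sum_comm]
  exact Finset.sum_congr rfl fun z _ => by rw [Finset.mul_sum]

lemma kmass_succ_le (hd : d ≠ 0) (x : T d N) (k : ℕ) :
    kmass d N U x (k + 1) ≤ kmass d N U x k := by
  rw [kmass_add d N U x k 1]
  calc ∑ z : T d N, kheatT d N U x k z * kmass d N U z 1
      ≤ ∑ z : T d N, kheatT d N U x k z * 1 :=
        Finset.sum_le_sum fun z _ => mul_le_mul_right (kmass_le_one d N U hd z 1) _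
    _ = kmass d N U x k := by simp [kmass]

lemma kmass_anti (hd : d ≠ 0) (x : T d N) {j k : ℕ} (h : j ≤ k) :
    kmass d N U x k ≤ kmass d N U x j := by
  induction k with
  | zero => simp_all
  | succ k ih =>
    rcases Nat.lt_or_ge j (k+1) with hlt | hge
    · exact (kmass_succ_le d N U hd x k).trans (ih (by omega))
    · have : j = k + 1 := by omega
      subst this; exact le_refl _

/-- The escape estimate: some finite time `K ≥ 1` and `ρ < 1` with `P_x[T_U > K] ≤ ρ`. -/
lemma escape (hd : d ≠ 0) (hU : U ≠ Set.univ) :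
    ∃ (K : ℕ) (ρ : ℝ≥0∞), 1 ≤ K ∧ ρ < 1 ∧ ∀ x : T d N, kmass d N U x K ≤ ρ := by
  obtain ⟨u0, hu0⟩ : ∃ u0, u0 ∉ U := by
    by_contra h
    push_neg at h
    exact hU (Set.eq_univ_of_forall h)
  have hL : ∀ x : T d N, ∃ k, heatT d N x k u0 ≠ 0 := fun x => heatT_exists_ne_zero d N hd x u0
  choose L hLne using hL
  refine ⟨(Finset.univ.sup L) + 1,
    Finset.univ.sup (fun x => 1 - heatT d N x (L x) u0), by omega, ?_, ?_⟩
  · rw [Finset.sup_lt_iff (by simp : (⊥:ℝ≥0∞) < 1)]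
    intro x _
    exact ENNReal.sub_lt_self one_ne_top one_ne_zero (hLne x)
  · intro x
    have h1 : kmass d N U x ((Finset.univ.sup L) + 1) ≤ kmass d N U x (L x) :=
      kmass_anti d N U hd x (by
        have := Finset.le_sup (Finset.mem_univ x) (f := L); omega)
    refine h1.trans ?_
    have h2 : kmass d N U x (L x) + heatT d N x (L x) u0 ≤ 1 := by
      have hz : kheatT d N U x (L x) u0 = 0 := kheatT_of_not_mem_right d N U x (L x) u0 hu0
      calc kmass d N U x (L x) + heatT d N x (L x) u0
          = ∑ z ∈ Finset.univ.erase u0, kheatT d N U x (L x) z + heatT d N x (L x) u0 := by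
            unfold kmass
            rw [← Finset.add_sum_erase Finset.univ _ (Finset.mem_univ u0), hz, zero_add]
        _ ≤ ∑ z ∈ Finset.univ.erase u0, heatT d N x (L x) z + heatT d N x (L x) u0 :=
            add_le_add_left (Finset.sum_le_sum fun z _ => kheatT_le_heatT d N U x (L x) z) _
        _ = ∑ z : T d N, heatT d N x (L x) z := by
            rw [add_comm, Finset.add_sum_erase Finset.univ _ (Finset.mem_univ u0)]
        _ = 1 := sum_heatT d N hd x (L x)
    have h3 : kmass d N U x (L x) ≤ 1 - heatT d N x (L x) u0 :=
      ENNReal.le_sub_of_add_le_right (heatT_ne_top d N hd x (L x) u0) h2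
    exact h3.trans (Finset.le_sup (f := fun x => 1 - heatT d N x (L x) u0) (Finset.mem_univ x))

lemma kmass_pow (hd : d ≠ 0) {K : ℕ} {ρ : ℝ≥0∞} (hK : ∀ x : T d N, kmass d N U x K ≤ ρ)
    (n : ℕ) (x : T d N) : kmass d N U x (n * K) ≤ ρ ^ n := by
  induction n generalizing x with
  | zero => simpa using kmass_zero_le_one d N U x
  | succ n ih =>
    have : (n + 1) * K = n * K + K := by ring
    rw [this, kmass_add]
    calc ∑ z : T d N, kheatT d N U x (n * K) z * kmass d N U z K
        ≤ ∑ z : T d N, kheatT d N U x (n * K) z * ρ :=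
          Finset.sum_le_sum fun z _ => mul_le_mul_right (hK z) _
      _ = kmass d N U x (n * K) * ρ := by rw [← Finset.sum_mul]; rfl
      _ ≤ ρ ^ n * ρ := mul_le_mul_left (ih x) _
      _ = ρ ^ (n + 1) := by ring

lemma etimeT_eq_tsum_kmass (x : T d N) : etimeT d N U x = ∑' k, kmass d N U x k := by
  unfold etimeT kmass
  exact tsum_congr fun k => tsum_fintype _

lemma etimeT_ne_top (hd : d ≠ 0) (hU : U ≠ Set.univ) (x : T d N) :
    etimeT d N U x ≠ ⊤ := by
  obtain ⟨K, ρ, hK1, hρ, hK⟩ := escape d N U hd hU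
  haveI : NeZero K := ⟨by omega⟩
  rw [etimeT_eq_tsum_kmass]
  have hb : ∀ k, kmass d N U x k ≤ ρ ^ (k / K) := by
    intro k
    calc kmass d N U x k ≤ kmass d N U x ((k / K) * K) :=
          kmass_anti d N U hd x (Nat.div_mul_le_self k K)
      _ ≤ ρ ^ (k / K) := kmass_pow d N U hd hK (k / K) x
  have : ∑' k, kmass d N U x k ≤ ∑' (k : ℕ), ρ ^ (k / K) := ENNReal.tsum_le_tsum hb
  refine ne_top_of_le_ne_top ?_ this
  have hre : ∑' (k : ℕ), ρ ^ (k / K) = ∑' (p : ℕ × Fin K), ρ ^ p.1 := by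
    rw [← Equiv.tsum_eq (Nat.divModEquiv K).symm (fun k : ℕ => ρ ^ (k / K))]
    refine tsum_congr fun p => ?_
    congr 1
    simp only [Nat.divModEquiv, Equiv.coe_fn_symm_mk]
    rw [mul_comm, Nat.mul_add_div (Nat.pos_of_ne_zero (NeZero.ne K)),
      Nat.div_eq_of_lt p.2.2, add_zero]
  rw [hre, ENNReal.tsum_prod (f := fun (a : ℕ) (_ : Fin K) => ρ ^ a)]
  have hfin : ∀ a : ℕ, ∑' (_ : Fin K), ρ ^ a = (K : ℝ≥0∞) * ρ ^ a := by
    intro a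
    rw [tsum_fintype]
    simp [Finset.card_univ, mul_comm]
  simp only [hfin]
  rw [ENNReal.tsum_mul_left, ENNReal.tsum_geometric]
  exact ENNReal.mul_ne_top (by simp)
    (ENNReal.inv_ne_top.mpr (by simp [tsub_eq_zero_iff_le, not_le, hρ]))

lemma kgreenT_le_etimeT (x y : T d N) : kgreenT d N U x y ≤ etimeT d N U x := by
  unfold kgreenT
  rw [etimeT_eq_tsum_kmass]
  refine ENNReal.tsum_le_tsum fun k => ?_
  exact Finset.single_le_sum (f := fun z => kheatT d N U x k z) (fun _ _ => zero_le)
    (Finset.mem_univ y)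

lemma kgreenT_ne_top (hd : d ≠ 0) (hU : U ≠ Set.univ) (x y : T d N) :
    kgreenT d N U x y ≠ ⊤ :=
  ne_top_of_le_ne_top (etimeT_ne_top d N U hd hU x) (kgreenT_le_etimeT d N U x y)

end Mass
end GFFPaper

namespace GFFPaper

/-- `eK d N U x j z = P_x[T_U = j, X_j = z]`. -/
noncomputable def eK (d N : ℕ) [NeZero N] (U : Set (T d N)) (x : T d N) : ℕ → T d N → ℝ≥0∞
  | 0, z => if x = z ∧ x ∉ U then 1 else 0
  | (j+1), z => if z ∈ U then 0 else ∑ w : T d N, kheatT d N U x j w * stepT d N w z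

section Exit

variable (d N : ℕ) [NeZero N] (U : Set (T d N))

lemma exitDistT_eq_tsum_eK (x z : T d N) :
    exitDistT d N U x z = ∑' j, eK d N U x j z := by
  rw [tsum_eq_zero_add' (f := fun j => eK d N U x j z) ENNReal.summable]
  by_cases hz : z ∈ U
  · rw [show exitDistT d N U x z = 0 from if_pos hz]
    have h0 : eK d N U x 0 z = 0 := by
      simp only [eK]
      rw [if_neg]
      rintro ⟨rfl, hx⟩
      exact hx hz
    rw [h0, zero_add]
    symm
    refine (ENNReal.summable.tsum_eq_zero_iff).mpr fun j => ?_
    simp only [eK, if_pos hz]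
  · rw [show exitDistT d N U x z
      = (if x = z ∧ x ∉ U then 1 else 0) +
        ∑' (k : ℕ), ∑' w, kheatT d N U x k w * stepT d N w z from if_neg hz]
    congr 1
    refine tsum_congr fun j => ?_
    simp only [eK, if_neg hz, tsum_fintype]

lemma sum_eK_succ_add_kmass (hd : d ≠ 0) (x : T d N) (j : ℕ) :
    ∑ z : T d N, eK d N U x (j+1) z + kmass d N U x (j+1) = kmass d N U x j := by
  unfold kmass
  simp only [eK, kheatT_succ]
  rw [← Finset.sum_add_distrib]
  have : ∀ z : T d N,
      ((if z ∈ U then 0 else ∑ w : T d N, kheatT d N U x j w * stepT d N w z) +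
       (if z ∈ U then ∑ w : T d N, kheatT d N U x j w * stepT d N w z else 0))
      = ∑ w : T d N, kheatT d N U x j w * stepT d N w z := by
    intro z
    split_ifs <;> simp
  rw [Finset.sum_congr rfl fun z _ => this z, Finset.sum_comm]
  refine Finset.sum_congr rfl fun w _ => ?_
  rw [← Finset.mul_sum, ← tsum_fintype (L := .unconditional _), sum_stepT d N hd, mul_one]

lemma sum_eK_range_add_kmass (hd : d ≠ 0) (x : T d N) (k : ℕ) :
    ∑ j ∈ Finset.range (k+1), ∑ z : T d N, eK d N U x j z + kmass d N U x k = 1 := by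
  induction k with
  | zero =>
    rw [Finset.sum_range_one, kmass_zero]
    by_cases hx : x ∈ U
    · rw [if_pos hx, Finset.sum_eq_zero fun z _ => by
        simp only [eK]; rw [if_neg]; rintro ⟨_, h⟩; exact h hx]
      simp
    · rw [if_neg hx, add_zero]
      simp only [eK]
      rw [Finset.sum_congr rfl (fun z _ => show (if x = z ∧ x ∉ U then (1:ℝ≥0∞) else 0)
        = if z = x then 1 else 0 by
          by_cases hzx : z = x
          · subst hzx; simp [hx]
          · rw [if_neg (fun hc => hzx hc.1.symm), if_neg hzx])]
      rw [Finset.sum_ite_eq' Finset.univ x (fun _ => (1:ℝ≥0∞))]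
      simp
  | succ k ih =>
    rw [Finset.sum_range_succ, add_assoc, sum_eK_succ_add_kmass d N U hd x k]
    exact ih

lemma tsum_sum_eK_le_one (hd : d ≠ 0) (x : T d N) :
    ∑' j, ∑ z : T d N, eK d N U x j z ≤ 1 := by
  refine ENNReal.tsum_le_of_sum_range_le fun n => ?_
  cases n with
  | zero => simp
  | succ n =>
    calc ∑ j ∈ Finset.range (n+1), ∑ z : T d N, eK d N U x j z
        ≤ ∑ j ∈ Finset.range (n+1), ∑ z : T d N, eK d N U x j z + kmass d N U x n :=
          le_add_right (le_refl _)
      _ = 1 := sum_eK_range_add_kmass d N U hd x n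

lemma exitDistT_le_one (hd : d ≠ 0) (x z : T d N) : exitDistT d N U x z ≤ 1 := by
  rw [exitDistT_eq_tsum_eK]
  refine le_trans ?_ (tsum_sum_eK_le_one d N U hd x)
  refine ENNReal.tsum_le_tsum fun j => ?_
  exact Finset.single_le_sum (f := fun z => eK d N U x j z) (fun _ _ => zero_le)
    (Finset.mem_univ z)

lemma exitDistT_ne_top (hd : d ≠ 0) (x z : T d N) : exitDistT d N U x z ≠ ⊤ :=
  ne_top_of_le_ne_top one_ne_top (exitDistT_le_one d N U hd x z)

lemma exitDistT_of_not_mem (x z : T d N) (hx : x ∉ U) :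
    exitDistT d N U x z = if x = z then 1 else 0 := by
  unfold exitDistT
  by_cases hz : z ∈ U
  · rw [if_pos hz, if_neg]
    rintro rfl
    exact hx hz
  · rw [if_neg hz]
    have h2 : ∑' (k : ℕ), ∑' w, kheatT d N U x k w * stepT d N w z = 0 := by
      refine (ENNReal.summable.tsum_eq_zero_iff).mpr fun k => ?_
      refine (ENNReal.summable.tsum_eq_zero_iff).mpr fun w => ?_
      rw [kheatT_of_not_mem_left d N U x hx k w, zero_mul]
    rw [h2, add_zero]
    by_cases hxz : x = z
    · rw [if_pos ⟨hxz, hx⟩, if_pos hxz]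
    · rw [if_neg (fun hc => hxz hc.1), if_neg hxz]

lemma kgreenT_of_not_mem (x y : T d N) (hx : x ∉ U) : kgreenT d N U x y = 0 := by
  unfold kgreenT
  refine (ENNReal.summable.tsum_eq_zero_iff).mpr fun k => ?_
  exact kheatT_of_not_mem_left d N U x hx k y

lemma etimeT_of_not_mem (x : T d N) (hx : x ∉ U) : etimeT d N U x = 0 := by
  unfold etimeT
  refine (ENNReal.summable.tsum_eq_zero_iff).mpr fun k => ?_
  refine (ENNReal.summable.tsum_eq_zero_iff).mpr fun z => ?_
  exact kheatT_of_not_mem_left d N U x hx k z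

lemma kgreenT_rec (x y : T d N) (hx : x ∈ U) :
    kgreenT d N U x y = (if x = y then 1 else 0)
      + ∑ w : T d N, stepT d N x w * kgreenT d N U w y := by
  unfold kgreenT
  rw [tsum_eq_zero_add' (f := fun k => kheatT d N U x k y) ENNReal.summable]
  congr 1
  · simp only [kheatT]
    by_cases hxy : x = y
    · subst hxy; simp [hx]
    · rw [if_neg (fun hc => hxy hc.1), if_neg hxy]
  · rw [tsum_congr fun k => kheatT_succ_left d N U x y hx k]
    rw [Summable.tsum_finsetSum fun _ _ => ENNReal.summable]
    exact Finset.sum_congr rfl fun w _ => ENNReal.tsum_mul_left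

lemma etimeT_rec (hd : d ≠ 0) (x : T d N) (hx : x ∈ U) :
    etimeT d N U x = 1 + ∑ w : T d N, stepT d N x w * etimeT d N U w := by
  rw [etimeT_eq_tsum_kmass, tsum_eq_zero_add' (f := fun k => kmass d N U x k) ENNReal.summable,
    kmass_zero, if_pos hx]
  congr 1
  have hstep : ∀ k, kmass d N U x (k+1) = ∑ w : T d N, stepT d N x w * kmass d N U w k := by
    intro k
    unfold kmass
    rw [Finset.sum_congr rfl fun z _ => kheatT_succ_left d N U x z hx k, Finset.sum_comm]
    exact Finset.sum_congr rfl fun w _ => (Finset.mul_sum _ _ _).symm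
  rw [tsum_congr hstep, Summable.tsum_finsetSum fun _ _ => ENNReal.summable]
  refine Finset.sum_congr rfl fun w _ => ?_
  rw [ENNReal.tsum_mul_left, etimeT_eq_tsum_kmass]

lemma exitDistT_rec (x z : T d N) (hx : x ∈ U) :
    exitDistT d N U x z = ∑ w : T d N, stepT d N x w * exitDistT d N U w z := by
  by_cases hz : z ∈ U
  · rw [show exitDistT d N U x z = 0 from if_pos hz]
    symm
    refine Finset.sum_eq_zero fun w _ => ?_
    rw [show exitDistT d N U w z = 0 from if_pos hz, mul_zero]
  · rw [show exitDistT d N U x z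
      = (if x = z ∧ x ∉ U then 1 else 0) +
        ∑' (k : ℕ), ∑' w, kheatT d N U x k w * stepT d N w z from if_neg hz]
    rw [if_neg (fun hc => hc.2 hx), zero_add]
    rw [tsum_eq_zero_add' (f := fun k => ∑' w, kheatT d N U x k w * stepT d N w z)
      ENNReal.summable]
    have h0 : ∑' w, kheatT d N U x 0 w * stepT d N w z = stepT d N x z := by
      rw [tsum_fintype]
      rw [Finset.sum_congr rfl (fun w _ => show kheatT d N U x 0 w * stepT d N w z
          = if w = x then stepT d N w z else 0 by
        simp only [kheatT]
        by_cases hwx : w = x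
        · subst hwx; simp [hx]
        · rw [if_neg (fun hc => hwx hc.1.symm), if_neg hwx, zero_mul])]
      rw [Finset.sum_ite_eq' Finset.univ x (fun w => stepT d N w z)]
      simp
    rw [h0]
    have hsucc : ∀ k, ∑' w, kheatT d N U x (k+1) w * stepT d N w z
        = ∑ u : T d N, stepT d N x u * ∑' w, kheatT d N U u k w * stepT d N w z := by
      intro k
      rw [tsum_fintype]
      rw [Finset.sum_congr rfl fun w _ => by
        rw [kheatT_succ_left d N U x w hx k, Finset.sum_mul]]
      rw [Finset.sum_comm]
      refine Finset.sum_congr rfl fun u _ => ?_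
      rw [tsum_fintype, Finset.mul_sum]
      exact Finset.sum_congr rfl fun w _ => by ring
    rw [tsum_congr hsucc, Summable.tsum_finsetSum fun _ _ => ENNReal.summable]
    have hrhs : ∀ w : T d N, stepT d N x w * exitDistT d N U w z
        = stepT d N x w * (if w = z ∧ w ∉ U then 1 else 0)
          + stepT d N x w * ∑' (k : ℕ), ∑' u, kheatT d N U w k u * stepT d N u z := by
      intro w
      rw [show exitDistT d N U w z
        = (if w = z ∧ w ∉ U then 1 else 0) +
          ∑' (k : ℕ), ∑' u, kheatT d N U w k u * stepT d N u z from if_neg hz, mul_add]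
    rw [Finset.sum_congr rfl fun w _ => hrhs w, Finset.sum_add_distrib]
    congr 1
    · rw [Finset.sum_congr rfl (fun w _ => show
          stepT d N x w * (if w = z ∧ w ∉ U then 1 else 0)
            = if w = z then stepT d N x w else 0 by
        by_cases hwz : w = z
        · subst hwz; simp [hz]
        · rw [if_neg (fun hc => hwz hc.1), if_neg hwz, mul_zero])]
      rw [Finset.sum_ite_eq' Finset.univ z (fun w => stepT d N x w)]
      simp
    · refine Finset.sum_congr rfl fun w _ => ?_
      rw [ENNReal.tsum_mul_left]

end Exit
end GFFPaper

namespace GFFPaper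

/-- Poisson weight `e^{-t} t^k / k!`. -/
noncomputable def pk (k : ℕ) (t : ℝ) : ℝ := Real.exp (-t) * t ^ k / (Nat.factorial k)

/-- `ℝ≥0∞`-valued continuous-time heat kernel. -/
noncomputable def hctE (d N : ℕ) (t : ℝ) (x y : T d N) : ℝ≥0∞ :=
  ∑' k : ℕ, ENNReal.ofReal (pk k t) * heatT d N x k y

section CT

variable (d N : ℕ) [NeZero N]

lemma hct_eq_tsum_pk (t : ℝ) (x y : T d N) :
    hct d N t x y = ∑' k, pk k t * (heatT d N x k y).toReal := rfl

lemma pk_nonneg {t : ℝ} (ht : 0 ≤ t) (k : ℕ) : 0 ≤ pk k t := by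
  unfold pk
  positivity

lemma pk_pos {t : ℝ} (ht : 0 < t) (k : ℕ) : 0 < pk k t := by
  unfold pk
  positivity

lemma pk_eq (k : ℕ) (t : ℝ) : pk k t = Real.exp (-t) * (t ^ k / (Nat.factorial k)) := by
  unfold pk; ring

lemma summable_pk (t : ℝ) : Summable (fun k => pk k t) := by
  have := (Real.summable_pow_div_factorial t).mul_left (Real.exp (-t))
  refine this.congr fun k => ?_
  rw [pk_eq]

lemma tsum_pk (t : ℝ) : ∑' k, pk k t = 1 := by
  have h1 : ∑' k, pk k t = Real.exp (-t) * ∑' k, t ^ k / (Nat.factorial k) := by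
    rw [← tsum_mul_left]
    exact tsum_congr fun k => pk_eq k t
  have h2 : ∑' k : ℕ, t ^ k / (Nat.factorial k : ℝ) = Real.exp t := by
    rw [Real.exp_eq_exp_ℝ, NormedSpace.exp_eq_tsum_div]
  rw [h1, h2, Real.exp_neg, inv_mul_cancel₀ (Real.exp_ne_zero t)]

lemma summable_pk_mul (t : ℝ) {a : ℕ → ℝ} (ha : ∀ k, ‖a k‖ ≤ 1) :
    Summable (fun k => pk k t * a k) := by
  refine Summable.of_norm_bounded (g := fun k => ‖pk k t‖) (summable_pk t).abs ?_
  intro k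
  rw [norm_mul]
  calc ‖pk k t‖ * ‖a k‖ ≤ ‖pk k t‖ * 1 := by
        exact mul_le_mul_of_nonneg_left (ha k) (norm_nonneg _)
    _ = ‖pk k t‖ := mul_one _

lemma heatT_toReal_le_one (hd : d ≠ 0) (x : T d N) (k : ℕ) (y : T d N) :
    ‖(heatT d N x k y).toReal‖ ≤ 1 := by
  rw [Real.norm_eq_abs, abs_of_nonneg ENNReal.toReal_nonneg]
  exact ENNReal.toReal_le_of_le_ofReal zero_le_one (by simpa using heatT_le_one d N hd x k y)

lemma summable_hct (hd : d ≠ 0) (t : ℝ) (x y : T d N) :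
    Summable (fun k => pk k t * (heatT d N x k y).toReal) :=
  summable_pk_mul t (fun k => heatT_toReal_le_one d N hd x k y)

lemma tsum_pkE {t : ℝ} (ht : 0 ≤ t) : ∑' k, ENNReal.ofReal (pk k t) = 1 := by
  rw [← ENNReal.ofReal_tsum_of_nonneg (pk_nonneg ht) (summable_pk t), tsum_pk,
    ENNReal.ofReal_one]

lemma hctE_le_one (hd : d ≠ 0) {t : ℝ} (ht : 0 ≤ t) (x y : T d N) :
    hctE d N t x y ≤ 1 := by
  unfold hctE
  calc ∑' k, ENNReal.ofReal (pk k t) * heatT d N x k y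
      ≤ ∑' k, ENNReal.ofReal (pk k t) * 1 :=
        ENNReal.tsum_le_tsum fun k => mul_le_mul_right (heatT_le_one d N hd x k y) _
    _ = 1 := by simpa using tsum_pkE ht

lemma hctE_ne_top (hd : d ≠ 0) {t : ℝ} (ht : 0 ≤ t) (x y : T d N) :
    hctE d N t x y ≠ ⊤ :=
  ne_top_of_le_ne_top one_ne_top (hctE_le_one d N hd ht x y)

lemma hctE_eq_ofReal (hd : d ≠ 0) {t : ℝ} (ht : 0 ≤ t) (x y : T d N) :
    hctE d N t x y = ENNReal.ofReal (hct d N t x y) := by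
  unfold hctE
  rw [hct_eq_tsum_pk,
    ENNReal.ofReal_tsum_of_nonneg
      (fun k => mul_nonneg (pk_nonneg ht k) ENNReal.toReal_nonneg)
      (summable_hct d N hd t x y)]
  refine tsum_congr fun k => ?_
  rw [ENNReal.ofReal_mul (pk_nonneg ht k),
    ENNReal.ofReal_toReal (heatT_ne_top d N hd x k y)]

lemma hct_eq_toReal (hd : d ≠ 0) {t : ℝ} (ht : 0 ≤ t) (x y : T d N) :
    hct d N t x y = (hctE d N t x y).toReal := by
  rw [hctE_eq_ofReal d N hd ht, ENNReal.toReal_ofReal]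
  rw [hct_eq_tsum_pk]
  exact tsum_nonneg fun k => mul_nonneg (pk_nonneg ht k) ENNReal.toReal_nonneg

lemma hct_nonneg (t : ℝ) (x y : T d N) (ht : 0 ≤ t) : 0 ≤ hct d N t x y := by
  rw [hct_eq_tsum_pk]
  exact tsum_nonneg fun k => mul_nonneg (pk_nonneg ht k) ENNReal.toReal_nonneg

lemma hct_le_one (hd : d ≠ 0) {t : ℝ} (ht : 0 ≤ t) (x y : T d N) : hct d N t x y ≤ 1 := by
  rw [hct_eq_toReal d N hd ht]
  exact ENNReal.toReal_le_of_le_ofReal zero_le_one (by simpa using hctE_le_one d N hd ht x y)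

lemma sum_hctE_row (hd : d ≠ 0) {t : ℝ} (ht : 0 ≤ t) (x : T d N) :
    ∑ y : T d N, hctE d N t x y = 1 := by
  unfold hctE
  rw [← Summable.tsum_finsetSum fun _ _ => ENNReal.summable]
  calc ∑' k, ∑ y : T d N, ENNReal.ofReal (pk k t) * heatT d N x k y
      = ∑' k, ENNReal.ofReal (pk k t) := by
        refine tsum_congr fun k => ?_
        rw [← Finset.mul_sum, sum_heatT d N hd x k, mul_one]
    _ = 1 := tsum_pkE ht

lemma sum_hctE_col (hd : d ≠ 0) {t : ℝ} (ht : 0 ≤ t) (y : T d N) :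
    ∑ x : T d N, hctE d N t x y = 1 := by
  unfold hctE
  rw [← Summable.tsum_finsetSum fun _ _ => ENNReal.summable]
  calc ∑' k, ∑ x : T d N, ENNReal.ofReal (pk k t) * heatT d N x k y
      = ∑' k, ENNReal.ofReal (pk k t) := by
        refine tsum_congr fun k => ?_
        rw [← Finset.mul_sum, sum_heatT_col d N hd y k, mul_one]
    _ = 1 := tsum_pkE ht

lemma sum_hct_row (hd : d ≠ 0) {t : ℝ} (ht : 0 ≤ t) (x : T d N) :
    ∑ y : T d N, hct d N t x y = 1 := by
  have h := sum_hctE_row d N hd ht x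
  have : ∑ y : T d N, hct d N t x y = (∑ y : T d N, hctE d N t x y).toReal := by
    rw [ENNReal.toReal_sum (fun y _ => hctE_ne_top d N hd ht x y)]
    exact Finset.sum_congr rfl fun y _ => hct_eq_toReal d N hd ht x y
  rw [this, h, ENNReal.toReal_one]

lemma sum_hct_col (hd : d ≠ 0) {t : ℝ} (ht : 0 ≤ t) (y : T d N) :
    ∑ x : T d N, hct d N t x y = 1 := by
  have h := sum_hctE_col d N hd ht y
  have : ∑ x : T d N, hct d N t x y = (∑ x : T d N, hctE d N t x y).toReal := by
    rw [ENNReal.toReal_sum (fun x _ => hctE_ne_top d N hd ht x y)]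
    exact Finset.sum_congr rfl fun x _ => hct_eq_toReal d N hd ht x y
  rw [this, h, ENNReal.toReal_one]

end CT
end GFFPaper

namespace GFFPaper
section Semigroup

variable (d N : ℕ) [NeZero N]

lemma pk_add (n : ℕ) (s t : ℝ) :
    pk n (s + t) = ∑ i ∈ Finset.range (n+1), pk i s * pk (n-i) t := by
  have key : (s + t) ^ n / (Nat.factorial n : ℝ)
      = ∑ i ∈ Finset.range (n+1), s ^ i * t ^ (n-i) / ((Nat.factorial i : ℝ) * (Nat.factorial (n-i) : ℝ)) := by
    rw [add_pow, Finset.sum_div]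
    refine Finset.sum_congr rfl fun i hi => ?_
    have hin : i ≤ n := Nat.lt_succ_iff.mp (Finset.mem_range.mp hi)
    have hfact : ((n.choose i : ℝ)) * ((Nat.factorial i : ℝ) * (Nat.factorial (n-i) : ℝ))
        = (Nat.factorial n : ℝ) := by
      rw [← mul_assoc]
      exact_mod_cast congrArg (Nat.cast (R := ℝ)) (Nat.choose_mul_factorial_mul_factorial hin)
    have h1 : (Nat.factorial i : ℝ) ≠ 0 := Nat.cast_ne_zero.mpr (Nat.factorial_ne_zero i)
    have h2 : (Nat.factorial (n-i) : ℝ) ≠ 0 := Nat.cast_ne_zero.mpr (Nat.factorial_ne_zero _)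
    have h3 : (Nat.factorial n : ℝ) ≠ 0 := Nat.cast_ne_zero.mpr (Nat.factorial_ne_zero n)
    field_simp
    rw [← hfact]
    ring
  have hexp : Real.exp (-(s+t)) = Real.exp (-s) * Real.exp (-t) := by
    rw [← Real.exp_add]; ring_nf
  calc pk n (s+t) = Real.exp (-s) * Real.exp (-t) * ((s+t)^n / (Nat.factorial n : ℝ)) := by
        rw [pk_eq, hexp]
    _ = ∑ i ∈ Finset.range (n+1),
          Real.exp (-s) * Real.exp (-t) * (s ^ i * t ^ (n-i) / ((Nat.factorial i : ℝ) * (Nat.factorial (n-i) : ℝ))) := by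
        rw [key, Finset.mul_sum]
    _ = ∑ i ∈ Finset.range (n+1), pk i s * pk (n-i) t := by
        refine Finset.sum_congr rfl fun i hi => ?_
        unfold pk
        ring

lemma pkE_add (n : ℕ) {s t : ℝ} (hs : 0 ≤ s) (ht : 0 ≤ t) :
    ENNReal.ofReal (pk n (s + t))
      = ∑ i ∈ Finset.range (n+1), ENNReal.ofReal (pk i s) * ENNReal.ofReal (pk (n-i) t) := by
  rw [pk_add, ENNReal.ofReal_sum_of_nonneg
    (fun i _ => mul_nonneg (pk_nonneg hs i) (pk_nonneg ht _))]
  exact Finset.sum_congr rfl fun i _ => ENNReal.ofReal_mul (pk_nonneg hs i)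

lemma tsum_range_eq_tsum_tsum (F : ℕ → ℕ → ℝ≥0∞) :
    ∑' n, ∑ i ∈ Finset.range (n+1), F i (n - i) = ∑' i, ∑' j, F i j := by
  have h1 : ∀ n : ℕ, ∑ i ∈ Finset.range (n+1), F i (n-i)
      = ∑' i, if i ≤ n then F i (n-i) else 0 := by
    intro n
    rw [tsum_eq_sum (s := Finset.range (n+1)) (fun i hi => by
      rw [if_neg (fun hle => hi (Finset.mem_range.mpr (by omega)))])]
    exact Finset.sum_congr rfl fun i hi =>
      (if_pos (Nat.lt_succ_iff.mp (Finset.mem_range.mp hi))).symm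
  rw [tsum_congr h1, ENNReal.tsum_comm]
  refine tsum_congr fun i => ?_
  have hinj : Function.Injective (fun j : ℕ => i + j) := fun a b h => by simpa using h
  have hsupp : Function.support (fun n => if i ≤ n then F i (n-i) else 0)
      ⊆ Set.range (fun j : ℕ => i + j) := by
    intro n hn
    have hle : i ≤ n := by
      by_contra hc
      exact hn (if_neg hc)
    exact ⟨n - i, show i + (n - i) = n by omega⟩
  rw [← Function.Injective.tsum_eq hinj hsupp]
  refine tsum_congr fun j => ?_
  show (if i ≤ i + j then F i (i + j - i) else 0) = F i j
  rw [if_pos (Nat.le_add_right i j), Nat.add_sub_cancel_left]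

lemma hctE_add (hd : d ≠ 0) {s t : ℝ} (hs : 0 ≤ s) (ht : 0 ≤ t) (x y : T d N) :
    hctE d N (s + t) x y = ∑ z : T d N, hctE d N s x z * hctE d N t z y := by
  unfold hctE
  calc ∑' n, ENNReal.ofReal (pk n (s+t)) * heatT d N x n y
      = ∑' n, ∑ i ∈ Finset.range (n+1),
          ∑ z : T d N, (ENNReal.ofReal (pk i s) * heatT d N x i z)
            * (ENNReal.ofReal (pk (n-i) t) * heatT d N z (n-i) y) := by
        refine tsum_congr fun n => ?_
        rw [pkE_add n hs ht, Finset.sum_mul]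
        refine Finset.sum_congr rfl fun i hi => ?_
        have hin : i ≤ n := Nat.lt_succ_iff.mp (Finset.mem_range.mp hi)
        have hCK : heatT d N x n y = ∑ z : T d N, heatT d N x i z * heatT d N z (n-i) y := by
          rw [← heatT_add d N x y i (n-i), Nat.add_sub_cancel' hin]
        rw [hCK, Finset.mul_sum]
        refine Finset.sum_congr rfl fun z _ => ?_
        ring
    _ = ∑' i, ∑' j, ∑ z : T d N, (ENNReal.ofReal (pk i s) * heatT d N x i z)
            * (ENNReal.ofReal (pk j t) * heatT d N z j y) :=
        tsum_range_eq_tsum_tsum (fun i j => ∑ z : T d N,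
          (ENNReal.ofReal (pk i s) * heatT d N x i z)
            * (ENNReal.ofReal (pk j t) * heatT d N z j y))
    _ = ∑ z : T d N, (∑' i, ENNReal.ofReal (pk i s) * heatT d N x i z)
            * (∑' j, ENNReal.ofReal (pk j t) * heatT d N z j y) := by
        rw [tsum_congr (fun i => Summable.tsum_finsetSum (fun z _ => ENNReal.summable)),
          Summable.tsum_finsetSum (fun z _ => ENNReal.summable)]
        refine Finset.sum_congr rfl fun z _ => ?_
        rw [← ENNReal.tsum_mul_right]
        exact tsum_congr fun i => ENNReal.tsum_mul_left

lemma hct_add (hd : d ≠ 0) {s t : ℝ} (hs : 0 ≤ s) (ht : 0 ≤ t) (x y : T d N) :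
    hct d N (s + t) x y = ∑ z : T d N, hct d N s x z * hct d N t z y := by
  rw [hct_eq_toReal d N hd (by linarith), hctE_add d N hd hs ht,
    ENNReal.toReal_sum (fun z _ => ENNReal.mul_ne_top (hctE_ne_top d N hd hs x z)
      (hctE_ne_top d N hd ht z y))]
  exact Finset.sum_congr rfl fun z _ => by
    rw [ENNReal.toReal_mul, hct_eq_toReal d N hd hs, hct_eq_toReal d N hd ht]

end Semigroup
end GFFPaper

namespace GFFPaper

/-- The constant `N^{-d}`. -/
noncomputable def cNd (d N : ℕ) : ℝ := 1 / (N:ℝ)^d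

section Doeblin

variable (d N : ℕ) [NeZero N]

lemma N_pos : 0 < (N:ℝ) := by
  have := NeZero.ne N
  positivity

lemma cNd_pos : 0 < cNd d N := by
  unfold cNd
  have := N_pos N
  positivity

lemma cNd_le_one : cNd d N ≤ 1 := by
  unfold cNd
  rw [div_le_one (by have := N_pos N; positivity)]
  exact one_le_pow₀ (by exact_mod_cast Nat.one_le_iff_ne_zero.mpr (NeZero.ne N))

lemma card_T : ((Fintype.card (T d N) : ℝ)) = (N:ℝ)^d := by
  rw [show Fintype.card (T d N) = Fintype.card (ZMod N) ^ d by
    rw [Fintype.card_fun, Fintype.card_fin]]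
  rw [ZMod.card]
  push_cast
  rfl

lemma card_mul_cNd : ((Fintype.card (T d N) : ℝ)) * cNd d N = 1 := by
  rw [card_T]
  unfold cNd
  field_simp
  exact div_self (by have := N_pos N; positivity)

lemma eps_exists (hd : d ≠ 0) :
    ∃ ε : ℝ, 0 < ε ∧ ∀ x y : T d N, ε ≤ hct d N 1 x y := by
  have hpos : ∀ x y : T d N, 0 < hct d N 1 x y := by
    intro x y
    rw [hct_eq_toReal d N hd zero_le_one]
    refine ENNReal.toReal_pos ?_ (hctE_ne_top d N hd zero_le_one x y)
    obtain ⟨k, hk⟩ := heatT_exists_ne_zero d N hd x y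
    intro h0
    have hle : ENNReal.ofReal (pk k 1) * heatT d N x k y ≤ hctE d N 1 x y := by
      unfold hctE
      exact ENNReal.le_tsum k
    rw [h0] at hle
    have := le_zero_iff.mp hle
    exact (mul_ne_zero (by simp [ENNReal.ofReal_eq_zero, not_le, pk_pos one_pos k]) hk) this
  obtain ⟨p, _, hp⟩ := Finset.exists_min_image Finset.univ
    (fun p : T d N × T d N => hct d N 1 p.1 p.2)
    ⟨((fun _ => 0), (fun _ => 0)), Finset.mem_univ _⟩
  exact ⟨hct d N 1 p.1 p.2, hpos p.1 p.2, fun x y => hp (x, y) (Finset.mem_univ _)⟩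

lemma doeblin_bound (hd : d ≠ 0) :
    ∃ ρ : ℝ, 0 ≤ ρ ∧ ρ < 1 ∧ ∀ (n : ℕ) (t : ℝ), 0 ≤ t → ∀ x y : T d N,
      |hct d N (t + n) x y - cNd d N| ≤ ρ ^ n := by
  obtain ⟨ε, hε, hεle⟩ := eps_exists d N hd
  set c := cNd d N with hc
  refine ⟨1 - ε * (N:ℝ)^d, ?_, ?_, ?_⟩
  · -- 0 ≤ ρ : since ∑_z (hct 1 x z - ε) ≥ 0 and equals 1 - ε N^d
    have x0 : T d N := (fun _ => 0)
    have hsum : ∑ z : T d N, (hct d N 1 x0 z - ε) = 1 - ε * (N:ℝ)^d := by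
      rw [Finset.sum_sub_distrib, sum_hct_row d N hd zero_le_one x0, Finset.sum_const,
        Finset.card_univ, nsmul_eq_mul, card_T, mul_comm]
    rw [← hsum]
    exact Finset.sum_nonneg fun z _ => sub_nonneg.mpr (hεle x0 z)
  · have : 0 < ε * (N:ℝ)^d := by
      have := N_pos N
      positivity
    linarith
  · intro n
    induction n with
    | zero =>
      intro t ht x y
      simp only [Nat.cast_zero, add_zero, pow_zero]
      have h1 := hct_nonneg d N (t) x y ht
      have h2 := hct_le_one d N hd ht x y
      have h3 := cNd_pos d N
      have h4 := cNd_le_one d N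
      rw [abs_le]
      constructor <;> [linarith; linarith]
    | succ n ih =>
      intro t ht x y
      have hcast : t + ((n:ℕ)+1 : ℕ) = 1 + ((t + n)) := by push_cast; ring
      have htn : (0:ℝ) ≤ t + n := by positivity
      rw [hcast]
      have hkey : hct d N (1 + (t + n)) x y - c
          = ∑ z : T d N, (hct d N 1 x z - ε) * (hct d N (t + n) z y - c) := by
        have expand : ∀ z : T d N, (hct d N 1 x z - ε) * (hct d N (t+n) z y - c)
            = hct d N 1 x z * hct d N (t+n) z y - c * hct d N 1 x z
              - ε * hct d N (t+n) z y + ε * c := fun z => by ring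
        rw [Finset.sum_congr rfl fun z _ => expand z]
        rw [Finset.sum_add_distrib, Finset.sum_sub_distrib, Finset.sum_sub_distrib,
          ← Finset.mul_sum, ← Finset.mul_sum, Finset.sum_const, Finset.card_univ, nsmul_eq_mul]
        rw [sum_hct_row d N hd zero_le_one x, sum_hct_col d N hd htn y,
          hct_add d N hd zero_le_one htn x y]
        have : ((Fintype.card (T d N) : ℝ)) * (ε * c) = ε := by
          rw [show ((Fintype.card (T d N) : ℝ)) * (ε * c) = ε * (((Fintype.card (T d N) : ℝ)) * c) by ring,
            card_mul_cNd, mul_one]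
        rw [this]
        ring
      rw [hkey]
      have hb : ∀ z : T d N, |(hct d N 1 x z - ε) * (hct d N (t + n) z y - c)|
          ≤ (hct d N 1 x z - ε) * (1 - ε * (N:ℝ)^d) ^ n := by
        intro z
        rw [abs_mul, abs_of_nonneg (sub_nonneg.mpr (hεle x z))]
        exact mul_le_mul_of_nonneg_left (ih (t) ht z y) (sub_nonneg.mpr (hεle x z))
      calc |∑ z : T d N, (hct d N 1 x z - ε) * (hct d N (t + n) z y - c)|
          ≤ ∑ z : T d N, |(hct d N 1 x z - ε) * (hct d N (t + n) z y - c)| :=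
            Finset.abs_sum_le_sum_abs _ _
        _ ≤ ∑ z : T d N, (hct d N 1 x z - ε) * (1 - ε * (N:ℝ)^d) ^ n :=
            Finset.sum_le_sum fun z _ => hb z
        _ = (1 - ε * (N:ℝ)^d) * (1 - ε * (N:ℝ)^d) ^ n := by
            rw [← Finset.sum_mul]
            congr 1
            rw [Finset.sum_sub_distrib, sum_hct_row d N hd zero_le_one x, Finset.sum_const,
              Finset.card_univ, nsmul_eq_mul, card_T, mul_comm]
        _ = (1 - ε * (N:ℝ)^d) ^ (n+1) := by ring

lemma doeblin_floor (hd : d ≠ 0) :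
    ∃ ρ : ℝ, 0 ≤ ρ ∧ ρ < 1 ∧ ∀ (t : ℝ), 0 ≤ t → ∀ x y : T d N,
      |hct d N t x y - cNd d N| ≤ ρ ^ (⌊t⌋₊) := by
  obtain ⟨ρ, h0, h1, hb⟩ := doeblin_bound d N hd
  refine ⟨ρ, h0, h1, fun t ht x y => ?_⟩
  have h2 : t - (⌊t⌋₊ : ℝ) + (⌊t⌋₊ : ℝ) = t := by ring
  have h3 : (0:ℝ) ≤ t - (⌊t⌋₊ : ℝ) := sub_nonneg.mpr (Nat.floor_le ht)
  have := hb ⌊t⌋₊ (t - (⌊t⌋₊:ℝ)) h3 x y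
  rwa [h2] at this

end Doeblin
end GFFPaper

namespace GFFPaper
section Analytic

open Set Topology

variable (d N : ℕ) [NeZero N]

lemma continuous_pk (k : ℕ) : Continuous (pk k) := by
  unfold pk
  exact ((Real.continuous_exp.comp continuous_neg).mul (continuous_pow k)).div_const _

lemma measurable_hctE (x y : T d N) : Measurable (fun t => hctE d N t x y) := by
  unfold hctE
  refine Measurable.ennreal_tsum fun k => ?_
  exact ((continuous_pk k).measurable.ennreal_ofReal).mul_const _

lemma aesm_hct (hd : d ≠ 0) (x y : T d N) :
    AEStronglyMeasurable (fun t => hct d N t x y) (volume.restrict (Ioi (0:ℝ))) := by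
  have hm : Measurable (fun t => (hctE d N t x y).toReal) :=
    (measurable_hctE d N x y).ennreal_toReal
  refine hm.aestronglyMeasurable.congr ?_
  filter_upwards [ae_restrict_mem measurableSet_Ioi] with t ht
  exact (hct_eq_toReal d N hd (le_of_lt ht) x y).symm

lemma aesm_hct_Ioc (hd : d ≠ 0) (x y : T d N) (T : ℝ) :
    AEStronglyMeasurable (fun t => hct d N t x y) (volume.restrict (Ioc (0:ℝ) T)) :=
  (aesm_hct d N hd x y).mono_measure (Measure.restrict_mono Ioc_subset_Ioi_self le_rfl)

lemma integrableOn_hct_Ioc (hd : d ≠ 0) (x y : T d N) (T : ℝ) :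
    IntegrableOn (fun t => hct d N t x y) (Ioc (0:ℝ) T) := by
  refine Integrable.mono' (g := fun _ => (1:ℝ)) ?_ (aesm_hct_Ioc d N hd x y T) ?_
  · rw [integrable_const_iff]
    right
    rw [isFiniteMeasure_restrict]
    simp [Real.volume_Ioc]
  · filter_upwards [ae_restrict_mem measurableSet_Ioc] with t ht
    rw [Real.norm_eq_abs, abs_of_nonneg (hct_nonneg d N t x y (le_of_lt ht.1))]
    exact hct_le_one d N hd (le_of_lt ht.1) x y

lemma integrableOn_hct_sub (hd : d ≠ 0) (x y : T d N) :
    IntegrableOn (fun t => hct d N t x y - cNd d N) (Ioi (0:ℝ)) := by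
  obtain ⟨ρ, hρ0, hρ1, hb⟩ := doeblin_floor d N hd
  set ρ' := max ρ 2⁻¹ with hρ'
  have hρ'0 : 0 < ρ' := lt_of_lt_of_le (by norm_num) (le_max_right _ _)
  have hρ'1 : ρ' < 1 := max_lt hρ1 (by norm_num)
  set b := -Real.log ρ' with hbdef
  have hbpos : 0 < b := by
    rw [hbdef, neg_pos]
    exact Real.log_neg hρ'0 hρ'1
  have hint : IntegrableOn (fun t => Real.exp b * Real.exp (-b * t)) (Ioi (0:ℝ)) :=
    (exp_neg_integrableOn_Ioi 0 hbpos).const_mul _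
  refine Integrable.mono' hint ((aesm_hct d N hd x y).sub aestronglyMeasurable_const) ?_
  filter_upwards [ae_restrict_mem measurableSet_Ioi] with t ht
  have h1 : |hct d N t x y - cNd d N| ≤ ρ' ^ (⌊t⌋₊) := by
    refine (hb t (le_of_lt ht) x y).trans ?_
    exact pow_le_pow_left₀ hρ0 (le_max_left _ _) _
  have h2 : ρ' ^ (⌊t⌋₊) ≤ Real.exp b * Real.exp (-b * t) := by
    have hfl : t - 1 ≤ (⌊t⌋₊ : ℝ) := by
      have := Nat.lt_floor_add_one t
      linarith
    calc ρ' ^ (⌊t⌋₊) = ρ' ^ ((⌊t⌋₊ : ℝ)) := (Real.rpow_natCast ρ' _).symm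
      _ ≤ ρ' ^ (t - 1) := Real.rpow_le_rpow_of_exponent_ge hρ'0 (le_of_lt hρ'1) hfl
      _ = Real.exp (Real.log ρ' * (t - 1)) := by
          rw [Real.rpow_def_of_pos hρ'0]
      _ = Real.exp b * Real.exp (-b * t) := by
          rw [← Real.exp_add]
          congr 1
          rw [hbdef]
          ring
  exact le_trans h1 h2

lemma tendsto_hct_atTop (hd : d ≠ 0) (x y : T d N) :
    Tendsto (fun t => hct d N t x y) atTop (𝓝 (cNd d N)) := by
  obtain ⟨ρ, hρ0, hρ1, hb⟩ := doeblin_floor d N hd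
  set ρ' := max ρ 2⁻¹ with hρ'
  have hρ'0 : 0 < ρ' := lt_of_lt_of_le (by norm_num) (le_max_right _ _)
  have hρ'1 : ρ' < 1 := max_lt hρ1 (by norm_num)
  set b := -Real.log ρ' with hbdef
  have hbpos : 0 < b := by
    rw [hbdef, neg_pos]
    exact Real.log_neg hρ'0 hρ'1
  have hg : Tendsto (fun t : ℝ => Real.exp b * Real.exp (-b * t)) atTop (𝓝 0) := by
    rw [show (0:ℝ) = Real.exp b * 0 by ring]
    refine Tendsto.const_mul _ ?_
    have h1 : Tendsto (fun t : ℝ => -b * t) atTop atBot := by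
      exact tendsto_id.const_mul_atTop_of_neg (neg_neg_iff_pos.mpr hbpos)
    exact Real.tendsto_exp_atBot.comp h1
  have hsub : Tendsto (fun t => hct d N t x y - cNd d N) atTop (𝓝 0) := by
    refine squeeze_zero_norm' ?_ hg
    filter_upwards [eventually_ge_atTop (0:ℝ)] with t ht
    have h1 : |hct d N t x y - cNd d N| ≤ ρ' ^ (⌊t⌋₊) :=
      (hb t ht x y).trans (pow_le_pow_left₀ hρ0 (le_max_left _ _) _)
    refine h1.trans ?_
    have hfl : t - 1 ≤ (⌊t⌋₊ : ℝ) := by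
      have := Nat.lt_floor_add_one t
      linarith
    calc ρ' ^ (⌊t⌋₊) = ρ' ^ ((⌊t⌋₊ : ℝ)) := (Real.rpow_natCast ρ' _).symm
      _ ≤ ρ' ^ (t - 1) := Real.rpow_le_rpow_of_exponent_ge hρ'0 (le_of_lt hρ'1) hfl
      _ = Real.exp (Real.log ρ' * (t - 1)) := by rw [Real.rpow_def_of_pos hρ'0]
      _ = Real.exp b * Real.exp (-b * t) := by
          rw [← Real.exp_add]; congr 1; rw [hbdef]; ring
  have := hsub.add_const (cNd d N)
  simpa using this

end Analytic
end GFFPaper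

namespace GFFPaper

/-- `Ik k T = ∫_0^T pk k t dt`. -/
noncomputable def Ik (k : ℕ) (T : ℝ) : ℝ := ∫ t in (0:ℝ)..T, pk k t

section IkLemmas

open Set Topology intervalIntegral

lemma pk_intervalIntegrable (k : ℕ) (a b : ℝ) : IntervalIntegrable (pk k) volume a b :=
  (continuous_pk k).intervalIntegrable a b

lemma Ik_nonneg (k : ℕ) {T : ℝ} (hT : 0 ≤ T) : 0 ≤ Ik k T := by
  unfold Ik
  refine intervalIntegral.integral_nonneg hT fun t ht => pk_nonneg ht.1 k

lemma pk_le_bound (k : ℕ) {t T : ℝ} (ht : 0 ≤ t) (htT : t ≤ T) : pk k t ≤ T ^ k / (Nat.factorial k) := by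
  unfold pk
  have h1 : Real.exp (-t) ≤ 1 := Real.exp_le_one_iff.mpr (by linarith)
  have h2 : t ^ k ≤ T ^ k := pow_le_pow_left₀ ht htT k
  have h3 : (0:ℝ) < (Nat.factorial k : ℝ) := by exact_mod_cast Nat.factorial_pos k
  rw [div_le_div_iff_of_pos_right h3]
  calc Real.exp (-t) * t ^ k ≤ 1 * t ^ k :=
        mul_le_mul_of_nonneg_right h1 (pow_nonneg ht k)
    _ = t ^ k := one_mul _
    _ ≤ T ^ k := h2

lemma Ik_le (k : ℕ) {T : ℝ} (hT : 0 ≤ T) : Ik k T ≤ T * (T ^ k / (Nat.factorial k)) := by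
  unfold Ik
  calc ∫ t in (0:ℝ)..T, pk k t ≤ ∫ t in (0:ℝ)..T, (T ^ k / (Nat.factorial k) : ℝ) := by
        refine intervalIntegral.integral_mono_on hT (pk_intervalIntegrable k 0 T)
          (intervalIntegrable_const) fun t ht => pk_le_bound k ht.1 ht.2
    _ = T * (T ^ k / (Nat.factorial k)) := by
        rw [intervalIntegral.integral_const, smul_eq_mul, sub_zero]

lemma summable_Ik_mul {T : ℝ} (hT : 0 ≤ T) {a : ℕ → ℝ} (ha : ∀ k, ‖a k‖ ≤ 1) :
    Summable (fun k => Ik k T * a k) := by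
  have hs : Summable (fun k : ℕ => T * (T ^ k / (Nat.factorial k))) :=
    (Real.summable_pow_div_factorial T).mul_left T
  refine Summable.of_norm_bounded hs fun k => ?_
  rw [norm_mul]
  calc ‖Ik k T‖ * ‖a k‖ ≤ ‖Ik k T‖ * 1 := mul_le_mul_of_nonneg_left (ha k) (norm_nonneg _)
    _ = ‖Ik k T‖ := mul_one _
    _ = Ik k T := by rw [Real.norm_eq_abs, abs_of_nonneg (Ik_nonneg k hT)]
    _ ≤ T * (T ^ k / (Nat.factorial k)) := Ik_le k hT

lemma hasDerivAt_pk (k : ℕ) (t : ℝ) :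
    HasDerivAt (pk (k+1)) (pk k t - pk (k+1) t) t := by
  have h1 : HasDerivAt (fun s : ℝ => Real.exp (-s)) (-Real.exp (-t)) t := by
    simpa using (hasDerivAt_neg t).exp
  have h2 : HasDerivAt (fun s : ℝ => s ^ (k+1)) (((k:ℝ)+1) * t ^ k) t := by
    simpa using hasDerivAt_pow (k+1) t
  have h3 := (h1.mul h2).div_const ((Nat.factorial (k+1) : ℝ))
  have heq : (-Real.exp (-t) * t ^ (k+1) + Real.exp (-t) * (((k:ℝ)+1) * t ^ k))
      / (Nat.factorial (k+1) : ℝ) = pk k t - pk (k+1) t := by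
    unfold pk
    rw [Nat.factorial_succ]
    have hk : (Nat.factorial k : ℝ) ≠ 0 := Nat.cast_ne_zero.mpr (Nat.factorial_ne_zero k)
    have hk1 : ((k:ℝ) + 1) ≠ 0 := by positivity
    push_cast
    field_simp
    ring
  rw [← heq]
  exact h3.congr_deriv rfl

lemma Ik_sub (k : ℕ) (T : ℝ) : Ik k T - Ik (k+1) T = pk (k+1) T := by
  unfold Ik
  rw [← intervalIntegral.integral_sub (pk_intervalIntegrable k 0 T)
    (pk_intervalIntegrable (k+1) 0 T)]
  have hftc : ∫ t in (0:ℝ)..T, (pk k t - pk (k+1) t) = pk (k+1) T - pk (k+1) 0 := by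
    refine intervalIntegral.integral_eq_sub_of_hasDerivAt (fun t _ => hasDerivAt_pk k t) ?_
    exact ((continuous_pk k).sub (continuous_pk (k+1))).intervalIntegrable 0 T
  rw [hftc, show pk (k+1) 0 = 0 by unfold pk; simp, sub_zero]

lemma integrableOn_pk (k : ℕ) : IntegrableOn (pk k) (Ioi (0:ℝ)) := by
  have h := Real.GammaIntegral_convergent (s := (k:ℝ)+1) (by positivity)
  have h2 : IntegrableOn (fun x : ℝ => Real.exp (-x) * x ^ k) (Ioi (0:ℝ)) := by
    refine h.congr_fun (fun x _ => ?_) measurableSet_Ioi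
    rw [show ((k:ℝ)+1-1) = ((k:ℕ):ℝ) by ring]; simp only [Real.rpow_natCast]
  exact h2.div_const ((Nat.factorial k : ℝ))

lemma integral_pk (k : ℕ) : ∫ t in Ioi (0:ℝ), pk k t = 1 := by
  have hg : Real.Gamma ((k:ℝ)+1) = ∫ x in Ioi (0:ℝ), Real.exp (-x) * x ^ ((k:ℝ)+1-1) :=
    Real.Gamma_eq_integral (by positivity)
  have h2 : ∫ x in Ioi (0:ℝ), Real.exp (-x) * x ^ ((k:ℝ)+1-1)
      = ∫ x in Ioi (0:ℝ), Real.exp (-x) * x ^ k := by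
    congr 1
    funext x
    rw [show ((k:ℝ)+1-1) = ((k:ℕ):ℝ) by ring, Real.rpow_natCast]
  have h3 : ∫ t in Ioi (0:ℝ), pk k t
      = (∫ x in Ioi (0:ℝ), Real.exp (-x) * x ^ k) / (Nat.factorial k : ℝ) := by
    rw [← MeasureTheory.integral_div]
    rfl
  rw [h3, ← h2, ← hg, Real.Gamma_nat_eq_factorial]
  rw [div_self (Nat.cast_ne_zero.mpr (Nat.factorial_ne_zero k))]

lemma Ik_tendsto (k : ℕ) : Tendsto (fun T => Ik k T) atTop (𝓝 1) := by
  have := intervalIntegral_tendsto_integral_Ioi (a := 0) (f := pk k)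
    (integrableOn_pk k) (tendsto_id (α := ℝ))
  rw [integral_pk k] at this
  exact this

end IkLemmas
end GFFPaper

namespace GFFPaper
section Swap

open Set Topology

variable (d N : ℕ) [NeZero N]

lemma integral_Ioc_tsum_pk {T : ℝ} (hT : 0 ≤ T) {a : ℕ → ℝ} (ha0 : ∀ k, 0 ≤ a k)
    (ha1 : ∀ k, a k ≤ 1) :
    ∫ t in Ioc (0:ℝ) T, (∑' k, pk k t * a k) = ∑' k, Ik k T * a k := by
  have hmeas : ∀ k : ℕ, AEStronglyMeasurable (fun t => pk k t * a k)
      (volume.restrict (Ioc (0:ℝ) T)) := fun k =>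
    ((continuous_pk k).mul continuous_const).aestronglyMeasurable
  have hbound : ∑' k, ∫⁻ t in Ioc (0:ℝ) T, ‖pk k t * a k‖₊ ≠ ⊤ := by
    have hb : ∀ k, ∫⁻ t in Ioc (0:ℝ) T, (‖pk k t * a k‖₊ : ℝ≥0∞)
        ≤ ENNReal.ofReal (T ^ k / (Nat.factorial k)) * ENNReal.ofReal T := by
      intro k
      calc ∫⁻ t in Ioc (0:ℝ) T, (‖pk k t * a k‖₊ : ℝ≥0∞)
          ≤ ∫⁻ _ in Ioc (0:ℝ) T, ENNReal.ofReal (T ^ k / (Nat.factorial k)) := by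
            refine setLIntegral_mono measurable_const fun t ht => ?_
            rw [← enorm_eq_nnnorm, ← ofReal_norm]
            refine ENNReal.ofReal_le_ofReal ?_
            rw [norm_mul]
            calc ‖pk k t‖ * ‖a k‖ ≤ ‖pk k t‖ * 1 := by
                  refine mul_le_mul_of_nonneg_left ?_ (norm_nonneg _)
                  rw [Real.norm_eq_abs, abs_of_nonneg (ha0 k)]
                  exact ha1 k
              _ = |pk k t| := by rw [mul_one, Real.norm_eq_abs]
              _ = pk k t := abs_of_nonneg (pk_nonneg (le_of_lt ht.1) k)
              _ ≤ T ^ k / (Nat.factorial k) := pk_le_bound k (le_of_lt ht.1) ht.2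
        _ = ENNReal.ofReal (T ^ k / (Nat.factorial k)) * ENNReal.ofReal T := by
            rw [setLIntegral_const, Real.volume_Ioc, sub_zero]
    refine ne_top_of_le_ne_top ?_ (ENNReal.tsum_le_tsum hb)
    rw [ENNReal.tsum_mul_right]
    refine ENNReal.mul_ne_top ?_ ENNReal.ofReal_ne_top
    rw [← ENNReal.ofReal_tsum_of_nonneg
      (fun k => div_nonneg (pow_nonneg hT k) (Nat.cast_nonneg _))
      (Real.summable_pow_div_factorial T)]
    exact ENNReal.ofReal_ne_top
  rw [MeasureTheory.integral_tsum hmeas hbound]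
  refine tsum_congr fun k => ?_
  rw [MeasureTheory.integral_mul_const]
  congr 1
  rw [Ik, intervalIntegral.integral_of_le hT]

lemma heatT_one (x z : T d N) : heatT d N x 1 z = stepT d N x z := by
  rw [heatT_succ]
  simp only [heatT]
  rw [Finset.sum_congr rfl (fun w _ => show (if x = w then (1:ℝ≥0∞) else 0) * stepT d N w z
      = if w = x then stepT d N w z else 0 by
    by_cases hwx : w = x
    · subst hwx; simp
    · rw [if_neg (fun hc => hwx hc.symm), if_neg hwx, zero_mul])]
  rw [Finset.sum_ite_eq' Finset.univ x (fun w => stepT d N w z)]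
  simp

lemma heatT_succ_left (x y : T d N) (k : ℕ) :
    heatT d N x (k+1) y = ∑ z : T d N, stepT d N x z * heatT d N z k y := by
  rw [show k + 1 = 1 + k by omega, heatT_add]
  exact Finset.sum_congr rfl fun z _ => by rw [heatT_one]

lemma sum_stepT_toReal (hd : d ≠ 0) (x : T d N) :
    ∑ z : T d N, (stepT d N x z).toReal = 1 := by
  have h := sum_stepT d N hd x
  rw [tsum_fintype] at h
  rw [← ENNReal.toReal_sum (fun z _ => stepT_ne_top d N hd x z), h, ENNReal.toReal_one]

lemma G_step (hd : d ≠ 0) (x y : T d N) :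
    ∑ z : T d N, (stepT d N x z).toReal * (∫ t in Ioi (0:ℝ), (hct d N t z y - cNd d N))
      = (∫ t in Ioi (0:ℝ), (hct d N t x y - cNd d N)) + cNd d N
        - (if x = y then (1:ℝ) else 0) := by
  classical
  set c := cNd d N with hc
  set a : T d N → ℕ → ℝ := fun z k => (heatT d N z k y).toReal with ha
  have ha0 : ∀ z k, 0 ≤ a z k := fun z k => ENNReal.toReal_nonneg
  have ha1 : ∀ z k, a z k ≤ 1 := by
    intro z k
    have := heatT_toReal_le_one d N hd z k y
    rwa [Real.norm_eq_abs, abs_of_nonneg (ha0 z k)] at this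
  have hanorm : ∀ z k, ‖a z k‖ ≤ 1 := fun z k => by
    rw [Real.norm_eq_abs, abs_of_nonneg (ha0 z k)]; exact ha1 z k
  set F : T d N → ℝ → ℝ := fun z R => ∫ t in (0:ℝ)..R, (hct d N t z y - c) with hF
  set E : T d N → ℝ := fun z => ∫ t in Ioi (0:ℝ), (hct d N t z y - c) with hE
  have hlim : ∀ z, Tendsto (F z) atTop (𝓝 (E z)) := fun z =>
    intervalIntegral_tendsto_integral_Ioi 0 (integrableOn_hct_sub d N hd z y) tendsto_id
  -- evaluation of F z R for R ≥ 0
  have heval : ∀ (z : T d N) (R : ℝ), 0 ≤ R →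
      F z R = (∑' k, Ik k R * a z k) - c * R := by
    intro z R hR
    rw [hF]
    simp only
    rw [intervalIntegral.integral_of_le hR]
    rw [MeasureTheory.integral_sub (integrableOn_hct_Ioc d N hd z y R)
      (by
        have hcc : IntegrableOn (fun _ : ℝ => c) (Ioc (0:ℝ) R) := by
          rw [integrableOn_const_iff]
          right
          simp [Real.volume_Ioc]
        exact hcc)]
    have h1 : ∫ t in Ioc (0:ℝ) R, hct d N t z y = ∑' k, Ik k R * a z k := by
      rw [show (fun t => hct d N t z y) = fun t => ∑' k, pk k t * a z k from
        funext fun t => hct_eq_tsum_pk d N t z y]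
      exact integral_Ioc_tsum_pk hR (ha0 z) (ha1 z)
    have h2 : ∫ _ in Ioc (0:ℝ) R, c = c * R := by
      rw [MeasureTheory.setIntegral_const, measureReal_def, Real.volume_Ioc, sub_zero,
        ENNReal.toReal_ofReal hR, smul_eq_mul, mul_comm]
    rw [h1, h2]
  -- the discrepancy identity
  have hD : ∀ R : ℝ, 0 ≤ R →
      (∑ z : T d N, (stepT d N x z).toReal * F z R) - F x R
        = hct d N R x y - pk 0 R * a x 0 - Ik 0 R * a x 0 := by
    intro R hR
    have hw1 : ∑ z : T d N, (stepT d N x z).toReal = 1 := sum_stepT_toReal d N hd x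
    have hsum1 : ∑ z : T d N, (stepT d N x z).toReal * F z R
        = (∑' k, Ik k R * a x (k+1)) - c * R := by
      rw [Finset.sum_congr rfl fun z _ => by rw [heval z R hR]]
      have hsplit : ∑ z : T d N, (stepT d N x z).toReal * ((∑' k, Ik k R * a z k) - c * R)
          = (∑ z : T d N, (stepT d N x z).toReal * (∑' k, Ik k R * a z k))
            - (∑ z : T d N, (stepT d N x z).toReal) * (c * R) := by
        rw [Finset.sum_mul, ← Finset.sum_sub_distrib]
        exact Finset.sum_congr rfl fun z _ => by ring
      rw [hsplit, hw1, one_mul]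
      congr 1
      rw [Finset.sum_congr rfl fun z _ => (tsum_mul_left (a := (stepT d N x z).toReal)
        (f := fun k => Ik k R * a z k)).symm]
      rw [← Summable.tsum_finsetSum (fun z _ => (summable_Ik_mul hR (hanorm z)).mul_left _)]
      refine tsum_congr fun k => ?_
      have hb : a x (k+1) = ∑ z : T d N, (stepT d N x z).toReal * a z k := by
        rw [ha]
        simp only
        rw [heatT_succ_left, ENNReal.toReal_sum (fun z _ => ENNReal.mul_ne_top
          (stepT_ne_top d N hd x z) (heatT_ne_top d N hd z k y))]
        exact Finset.sum_congr rfl fun z _ => ENNReal.toReal_mul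
      rw [hb, Finset.mul_sum]
      exact Finset.sum_congr rfl fun z _ => by ring
    rw [hsum1, heval x R hR]
    have hshift : Summable (fun k => Ik (k+1) R * a x (k+1)) := by
      have := summable_Ik_mul hR (hanorm x)
      exact ((summable_nat_add_iff 1).mpr this).congr fun k => rfl
    have hsummand : Summable (fun k => Ik k R * a x (k+1)) := by
      refine summable_Ik_mul hR fun k => hanorm x (k+1)
    have h3 : ∑' k, Ik k R * a x k
        = Ik 0 R * a x 0 + ∑' k, Ik (k+1) R * a x (k+1) := by
      exact tsum_eq_zero_add' hshift
    have h4 : ∑' k, Ik k R * a x (k+1) - ∑' k, Ik (k+1) R * a x (k+1)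
        = ∑' k, pk (k+1) R * a x (k+1) := by
      rw [← Summable.tsum_sub hsummand hshift]
      refine tsum_congr fun k => ?_
      rw [← sub_mul, Ik_sub]
    have h5 : ∑' k, pk (k+1) R * a x (k+1)
        = hct d N R x y - pk 0 R * a x 0 := by
      have h6 : ∑' k, pk k R * a x k
          = pk 0 R * a x 0 + ∑' k, pk (k+1) R * a x (k+1) := by
        refine tsum_eq_zero_add' ?_
        exact ((summable_nat_add_iff 1).mpr (summable_hct d N hd R x y)).congr fun k => rfl
      rw [hct_eq_tsum_pk, h6]
      ring
    rw [h3]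
    have : (∑' k, Ik k R * a x (k+1)) - c * R
        - (Ik 0 R * a x 0 + (∑' k, Ik (k+1) R * a x (k+1)) - c * R)
      = (∑' k, Ik k R * a x (k+1)) - (∑' k, Ik (k+1) R * a x (k+1)) - Ik 0 R * a x 0 := by
      ring
    rw [this, h4, h5]
  -- limits
  have hL : Tendsto (fun R => (∑ z : T d N, (stepT d N x z).toReal * F z R) - F x R)
      atTop (𝓝 ((∑ z : T d N, (stepT d N x z).toReal * E z) - E x)) := by
    refine Tendsto.sub ?_ (hlim x)
    exact tendsto_finset_sum _ fun z _ => (hlim z).const_mul _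
  have hR : Tendsto (fun R => hct d N R x y - pk 0 R * a x 0 - Ik 0 R * a x 0)
      atTop (𝓝 (c - 0 * a x 0 - 1 * a x 0)) := by
    refine Tendsto.sub (Tendsto.sub (tendsto_hct_atTop d N hd x y) ?_) ?_
    · refine Tendsto.mul_const _ ?_
      have : Tendsto (fun R : ℝ => Real.exp (-R)) atTop (𝓝 0) := by
        have h1 : Tendsto (fun R : ℝ => -R) atTop atBot := tendsto_neg_atTop_atBot
        exact Real.tendsto_exp_atBot.comp h1
      refine this.congr fun R => ?_
      unfold pk
      simp
    · exact Tendsto.mul_const _ (Ik_tendsto 0)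
  have heq : (fun R => (∑ z : T d N, (stepT d N x z).toReal * F z R) - F x R)
      =ᶠ[atTop] (fun R => hct d N R x y - pk 0 R * a x 0 - Ik 0 R * a x 0) := by
    filter_upwards [eventually_ge_atTop (0:ℝ)] with R hR
    exact hD R hR
  have := tendsto_nhds_unique (hL.congr' heq) hR
  have ha0x : a x 0 = if x = y then (1:ℝ) else 0 := by
    rw [ha]
    simp only [heatT]
    split_ifs <;> simp
  rw [ha0x] at this
  have hgoal : (∑ z : T d N, (stepT d N x z).toReal * E z)
      = E x + c - (if x = y then (1:ℝ) else 0) := by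
    have h7 : c - 0 * (if x = y then (1:ℝ) else 0) - 1 * (if x = y then (1:ℝ) else 0)
        = c - (if x = y then (1:ℝ) else 0) := by ring
    rw [h7] at this
    linarith [this]
  exact hgoal

end Swap
end GFFPaper

namespace GFFPaper

/-- The discrepancy function. -/
noncomputable def Hfun (d N : ℕ) [NeZero N] (U : Set (T d N)) (y : T d N) : T d N → ℝ :=
  fun x => (kgreenT d N U x y).toReal
    + (∑ z : T d N, (exitDistT d N U x z).toReal * G d N z y)
    - cNd d N * (etimeT d N U x).toReal - G d N x y

section Final

open Set Topology

variable (d N : ℕ) [NeZero N] (U : Set (T d N))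

lemma G_def (x y : T d N) :
    G d N x y = ∫ t in Ioi (0:ℝ), (hct d N t x y - cNd d N) := rfl

lemma kheatT_ne_top (hd : d ≠ 0) (x : T d N) (k : ℕ) (y : T d N) :
    kheatT d N U x k y ≠ ⊤ :=
  ne_top_of_le_ne_top one_ne_top (kheatT_le_one d N U hd x k y)

lemma toReal_ite (P : Prop) [Decidable P] :
    ((if P then (1:ℝ≥0∞) else 0)).toReal = if P then (1:ℝ) else 0 := by
  split_ifs <;> simp

lemma Hfun_outside (x : T d N) (hx : x ∉ U) : Hfun d N U y x = 0 := by
  unfold Hfun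
  rw [kgreenT_of_not_mem d N U x y hx, etimeT_of_not_mem d N U x hx]
  have hsum : ∑ z : T d N, (exitDistT d N U x z).toReal * G d N z y = G d N x y := by
    rw [Finset.sum_congr rfl fun z _ => by
      rw [exitDistT_of_not_mem d N U x z hx, toReal_ite, ite_mul, one_mul, zero_mul]]
    rw [Finset.sum_ite_eq Finset.univ x (fun z => G d N z y)]
    simp
  rw [hsum]
  simp

lemma G_step' (hd : d ≠ 0) (x y : T d N) :
    ∑ z : T d N, (stepT d N x z).toReal * G d N z y
      = G d N x y + cNd d N - (if x = y then (1:ℝ) else 0) := by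
  have h := G_step d N hd x y
  simpa only [← G_def] using h

lemma Hfun_harmonic (hd : d ≠ 0) (hU : U ≠ Set.univ) (x : T d N) (y : T d N) (hx : x ∈ U) :
    Hfun d N U y x = ∑ w : T d N, (stepT d N x w).toReal * Hfun d N U y w := by
  classical
  set c := cNd d N with hc
  set sw : T d N → ℝ := fun w => (stepT d N x w).toReal with hsw
  -- toReal recursions
  have hkg : (kgreenT d N U x y).toReal
      = (if x = y then (1:ℝ) else 0) + ∑ w : T d N, sw w * (kgreenT d N U w y).toReal := by
    rw [kgreenT_rec d N U x y hx, ENNReal.toReal_add (by split_ifs <;> simp)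
      (by
        rw [ne_eq, ENNReal.sum_eq_top]
        push_neg
        exact fun w _ => ENNReal.mul_ne_top (stepT_ne_top d N hd x w)
          (kgreenT_ne_top d N U hd hU w y)),
      toReal_ite, ENNReal.toReal_sum (fun w _ => ENNReal.mul_ne_top (stepT_ne_top d N hd x w)
        (kgreenT_ne_top d N U hd hU w y))]
    congr 1
    exact Finset.sum_congr rfl fun w _ => ENNReal.toReal_mul
  have het : (etimeT d N U x).toReal
      = 1 + ∑ w : T d N, sw w * (etimeT d N U w).toReal := by
    rw [etimeT_rec d N U hd x hx, ENNReal.toReal_add one_ne_top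
      (by
        rw [ne_eq, ENNReal.sum_eq_top]
        push_neg
        exact fun w _ => ENNReal.mul_ne_top (stepT_ne_top d N hd x w)
          (etimeT_ne_top d N U hd hU w)),
      ENNReal.toReal_one, ENNReal.toReal_sum (fun w _ => ENNReal.mul_ne_top
        (stepT_ne_top d N hd x w) (etimeT_ne_top d N U hd hU w))]
    congr 1
    exact Finset.sum_congr rfl fun w _ => ENNReal.toReal_mul
  have hex : ∀ z : T d N, (exitDistT d N U x z).toReal
      = ∑ w : T d N, sw w * (exitDistT d N U w z).toReal := by
    intro z
    rw [exitDistT_rec d N U x z hx, ENNReal.toReal_sum (fun w _ => ENNReal.mul_ne_top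
      (stepT_ne_top d N hd x w) (exitDistT_ne_top d N U hd w z))]
    exact Finset.sum_congr rfl fun w _ => ENNReal.toReal_mul
  have hGs : (∑ w : T d N, sw w * G d N w y) = G d N x y + c - (if x = y then (1:ℝ) else 0) := by
    rw [hsw]
    exact G_step' d N hd x y
  -- exit sum swap
  have hswap : ∑ z : T d N, (exitDistT d N U x z).toReal * G d N z y
      = ∑ w : T d N, sw w * ∑ z : T d N, (exitDistT d N U w z).toReal * G d N z y := by
    rw [Finset.sum_congr rfl fun z _ => by rw [hex z, Finset.sum_mul]]
    rw [Finset.sum_comm]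
    refine Finset.sum_congr rfl fun w _ => ?_
    rw [Finset.mul_sum]
    exact Finset.sum_congr rfl fun z _ => by ring
  have hsw1 : ∑ w : T d N, sw w = 1 := sum_stepT_toReal d N hd x
  unfold Hfun
  have hrhs : ∑ w : T d N, sw w * ((kgreenT d N U w y).toReal
        + (∑ z : T d N, (exitDistT d N U w z).toReal * G d N z y)
        - c * (etimeT d N U w).toReal - G d N w y)
      = (∑ w : T d N, sw w * (kgreenT d N U w y).toReal)
        + (∑ w : T d N, sw w * ∑ z : T d N, (exitDistT d N U w z).toReal * G d N z y)
        - c * (∑ w : T d N, sw w * (etimeT d N U w).toReal)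
        - (∑ w : T d N, sw w * G d N w y) := by
    rw [Finset.sum_congr rfl (fun w _ => show sw w * ((kgreenT d N U w y).toReal
        + (∑ z : T d N, (exitDistT d N U w z).toReal * G d N z y)
        - c * (etimeT d N U w).toReal - G d N w y)
      = sw w * (kgreenT d N U w y).toReal
        + sw w * (∑ z : T d N, (exitDistT d N U w z).toReal * G d N z y)
        - c * (sw w * (etimeT d N U w).toReal) - sw w * G d N w y by ring)]
    rw [Finset.sum_sub_distrib, Finset.sum_sub_distrib, Finset.sum_add_distrib,
      ← Finset.mul_sum]
  rw [hrhs, hkg, het, hswap, hGs]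
  ring

lemma Hfun_iter (hd : d ≠ 0) (hU : U ≠ Set.univ) (y : T d N) (k : ℕ) (x : T d N) :
    Hfun d N U y x = ∑ z : T d N, (kheatT d N U x k z).toReal * Hfun d N U y z := by
  induction k generalizing x with
  | zero =>
    by_cases hx : x ∈ U
    · simp only [kheatT]
      rw [Finset.sum_congr rfl fun z _ => show
          ((if x = z ∧ x ∈ U then (1:ℝ≥0∞) else 0)).toReal * Hfun d N U y z
            = if z = x then Hfun d N U y z else 0 by
        by_cases hzx : z = x
        · subst hzx; simp [hx]
        · rw [if_neg (fun hc => hzx hc.1.symm), if_neg hzx]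
          simp]
      rw [Finset.sum_ite_eq' Finset.univ x (fun z => Hfun d N U y z)]
      simp
    · rw [Hfun_outside d N U x hx]
      symm
      refine Finset.sum_eq_zero fun z _ => ?_
      by_cases hzx : z = x
      · subst hzx
        simp only [kheatT]
        rw [if_neg (fun hc => hx hc.2)]
        simp
      · simp only [kheatT]
        rw [if_neg (fun hc => hzx hc.1.symm)]
        simp
  | succ k ih =>
    rw [ih x]
    have hterm : ∀ z : T d N, (kheatT d N U x k z).toReal * Hfun d N U y z
        = (kheatT d N U x k z).toReal * ∑ w : T d N, (stepT d N z w).toReal * Hfun d N U y w := by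
      intro z
      by_cases hz : z ∈ U
      · rw [← Hfun_harmonic d N U hd hU z y hz]
      · rw [kheatT_of_not_mem_right d N U x k z hz]
        simp
    rw [Finset.sum_congr rfl fun z _ => hterm z]
    have hlhs : ∑ z : T d N, (kheatT d N U x k z).toReal
          * ∑ w : T d N, (stepT d N z w).toReal * Hfun d N U y w
        = ∑ w : T d N, (∑ z : T d N, (kheatT d N U x k z).toReal * (stepT d N z w).toReal)
            * Hfun d N U y w := by
      rw [Finset.sum_congr rfl fun z _ => Finset.mul_sum (a := (kheatT d N U x k z).toReal)
        (s := Finset.univ) (f := fun w => (stepT d N z w).toReal * Hfun d N U y w)]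
      rw [Finset.sum_comm]
      refine Finset.sum_congr rfl fun w _ => ?_
      rw [Finset.sum_mul]
      exact Finset.sum_congr rfl fun z _ => by ring
    rw [hlhs]
    refine Finset.sum_congr rfl fun w _ => ?_
    by_cases hw : w ∈ U
    · congr 1
      rw [kheatT_succ, if_pos hw, ENNReal.toReal_sum (fun z _ => ENNReal.mul_ne_top
        (kheatT_ne_top d N U hd x k z) (stepT_ne_top d N hd z w))]
      exact (Finset.sum_congr rfl fun z _ => ENNReal.toReal_mul).symm
    · rw [Hfun_outside d N U w hw, mul_zero, mul_zero]

end Final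
end GFFPaper

namespace GFFPaper
section Zero

open Set Topology

variable (d N : ℕ) [NeZero N] (U : Set (T d N))

lemma Hfun_zero (hd : d ≠ 0) (hU : U ≠ Set.univ) (y x : T d N) : Hfun d N U y x = 0 := by
  obtain ⟨K, ρ, hK1, hρ, hK⟩ := escape d N U hd hU
  have hρtop : ρ ≠ ⊤ := hρ.ne_top
  set M := ∑ z : T d N, |Hfun d N U y z| with hM
  have hM0 : 0 ≤ M := Finset.sum_nonneg fun z _ => abs_nonneg _
  have hMz : ∀ z, |Hfun d N U y z| ≤ M := fun z =>
    Finset.single_le_sum (f := fun z => |Hfun d N U y z|) (fun _ _ => abs_nonneg _)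
      (Finset.mem_univ z)
  have hbound : ∀ n : ℕ, |Hfun d N U y x| ≤ (ρ.toReal) ^ n * M := by
    intro n
    rw [Hfun_iter d N U hd hU y (n * K) x]
    calc |∑ z : T d N, (kheatT d N U x (n*K) z).toReal * Hfun d N U y z|
        ≤ ∑ z : T d N, |(kheatT d N U x (n*K) z).toReal * Hfun d N U y z| :=
          Finset.abs_sum_le_sum_abs _ _
      _ ≤ ∑ z : T d N, (kheatT d N U x (n*K) z).toReal * M := by
          refine Finset.sum_le_sum fun z _ => ?_
          rw [abs_mul, abs_of_nonneg ENNReal.toReal_nonneg]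
          exact mul_le_mul_of_nonneg_left (hMz z) ENNReal.toReal_nonneg
      _ = (kmass d N U x (n*K)).toReal * M := by
          rw [← Finset.sum_mul]
          congr 1
          rw [kmass, ENNReal.toReal_sum (fun z _ => kheatT_ne_top d N U hd x (n*K) z)]
      _ ≤ (ρ.toReal) ^ n * M := by
          refine mul_le_mul_of_nonneg_right ?_ hM0
          calc (kmass d N U x (n*K)).toReal ≤ (ρ ^ n).toReal :=
                ENNReal.toReal_mono (ENNReal.pow_ne_top hρtop)
                  (kmass_pow d N U hd hK n x)
            _ = (ρ.toReal) ^ n := ENNReal.toReal_pow ρ n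
  have hρr : ρ.toReal < 1 := by
    have := ENNReal.toReal_strict_mono one_ne_top hρ
    simpa using this
  have htend : Tendsto (fun n : ℕ => (ρ.toReal) ^ n * M) atTop (𝓝 0) := by
    rw [show (0:ℝ) = 0 * M by ring]
    exact (tendsto_pow_atTop_nhds_zero_of_lt_one ENNReal.toReal_nonneg hρr).mul_const M
  have hle : |Hfun d N U y x| ≤ 0 := ge_of_tendsto' htend hbound
  exact abs_eq_zero.mp (le_antisymm hle (abs_nonneg _))

end Zero

/-- For `U ⊊ T_N`:
`G_N(x,y) = g^U(x,y) + E_x[G_N(X_{T_U},y)] - N^{-d} E_x[T_U]`. -/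
theorem zeroAvgGreen_killed_identity (d N : ℕ) (hd : 3 ≤ d) (hN : 1 ≤ N)
    (U : Set (T d N)) (hU : U ≠ Set.univ) (x y : T d N) :
    G d N x y = (kgreenT d N U x y).toReal
      + (∑' z, (exitDistT d N U x z).toReal * G d N z y)
      - (1 / (N:ℝ) ^ d) * (etimeT d N U x).toReal := by
  haveI : NeZero N := ⟨by omega⟩
  have hd0 : d ≠ 0 := by omega
  have h := Hfun_zero d N U hd0 hU y x
  unfold Hfun at h
  rw [tsum_fintype]
  have hc : cNd d N = 1 / (N:ℝ)^d := rfl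
  rw [hc] at h
  linarith [h]

end GFFPaper
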